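/- arXiv:2307.06537 — 5 statements merged into one kernel-verified Lean document; each statement's English description precedes it below -/
import Mathlib

section
/- Let m, p be positive integers, A_c an m×m complex matrix, A_s a p×p complex matrix, G : ℂ^m → ℂ^p continuously differentiable, and F_s : ℝ → ℂ^p continuous. Fix τ ≥ 0 and define Φ_τ : ℂ^m × ℝ → ℂ^p by Φ_τ(X, t) = ∫_{−τ}^{0} e^{−s A_s} G(e^{s A_c} X) ds + ∫_{−τ}^{0} e^{−s A_s} F_s(s+t) ds. Then Φ_τ is differentiable in X and in t, and for all X ∈ ℂ^m and t ∈ ℝ it satisfies the homological equation ∂_t Φ_τ(X,t) + D_X Φ_τ(X,t)[A_c X] − A_s Φ_τ(X,t) = G(X) − e^{τ A_s} G(e^{−τ A_c} X) + F_s(t) − e^{τ A_s} F_s(t−τ), where D_X Φ_τ(X,t)[A_c X] denotes the derivative of Φ_τ(·,t) at X applied to the vector A_c X. -/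
open MeasureTheory intervalIntegral

/-- Matrix exponential over `ℂ`. -/
noncomputable def mexp {n : ℕ} (A : Matrix (Fin n) (Fin n) ℂ) : Matrix (Fin n) (Fin n) ℂ :=
  NormedSpace.exp A

noncomputable def mvc {a b : ℕ} (M : Matrix (Fin a) (Fin b) ℂ) :
    (Fin b → ℂ) →L[ℝ] (Fin a → ℂ) :=
  LinearMap.toContinuousLinearMap ((Matrix.mulVecLin M).restrictScalars ℝ)

@[simp] lemma mvc_apply {a b : ℕ} (M : Matrix (Fin a) (Fin b) ℂ) (x : Fin b → ℂ) :
    mvc M x = M.mulVec x := rfl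

lemma mexp_add_mul {n : ℕ} (A : Matrix (Fin n) (Fin n) ℂ) (a b : ℝ) :
    mexp ((a + b) • A) = mexp (a • A) * mexp (b • A) := by
  rw [add_smul]
  exact Matrix.exp_add_of_commute _ _ (((Commute.refl A).smul_left a).smul_right b)

@[simp] lemma mexp_zero_smul {n : ℕ} (A : Matrix (Fin n) (Fin n) ℂ) :
    mexp ((0:ℝ) • A) = 1 := by
  rw [zero_smul, mexp, NormedSpace.exp_zero]

@[simp] lemma mexp_zero {n : ℕ} : mexp (0 : Matrix (Fin n) (Fin n) ℂ) = 1 :=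
  NormedSpace.exp_zero

lemma mexp_comm {n : ℕ} (A : Matrix (Fin n) (Fin n) ℂ) (t : ℝ) :
    mexp (t • A) * A = A * mexp (t • A) :=
  (((Commute.refl A).smul_left t).exp_left)

noncomputable def mvcL (a b : ℕ) :
    Matrix (Fin a) (Fin b) ℂ →ₗ[ℝ] ((Fin b → ℂ) →L[ℝ] (Fin a → ℂ)) where
  toFun := mvc
  map_add' M N := by ext x; simp [Matrix.add_mulVec]
  map_smul' r M := by
    ext x j
    simp [Matrix.mulVec, dotProduct, Finset.smul_sum, Matrix.smul_apply, smul_mul_assoc,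
      mul_assoc]

lemma continuous_mvc {a b : ℕ} : Continuous (mvc (a := a) (b := b)) :=
  (mvcL a b).continuous_of_finiteDimensional

lemma hasDerivAt_mvc_mexp {n : ℕ} (A : Matrix (Fin n) (Fin n) ℂ) (t : ℝ) :
    HasDerivAt (fun u : ℝ => mvc (mexp (u • A))) (mvc (mexp (t • A) * A)) t := by
  letI : SeminormedRing (Matrix (Fin n) (Fin n) ℂ) := Matrix.linftyOpSemiNormedRing
  letI : NormedRing (Matrix (Fin n) (Fin n) ℂ) := Matrix.linftyOpNormedRing
  letI : NormedAlgebra ℝ (Matrix (Fin n) (Fin n) ℂ) := Matrix.linftyOpNormedAlgebra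
  letI : NormedAlgebra ℂ (Matrix (Fin n) (Fin n) ℂ) := Matrix.linftyOpNormedAlgebra
  have h1 : HasDerivAt (fun u : ℝ => mexp (u • A)) (mexp (t • A) * A) t := by
    have h := hasDerivAt_exp_smul_const (𝕂 := ℝ) A t
    exact h
  haveI : FiniteDimensional ℝ (Matrix (Fin n) (Fin n) ℂ) := by infer_instance
  have := (LinearMap.toContinuousLinearMap (mvcL n n)).hasFDerivAt
    (x := mexp (t • A)) |>.comp_hasDerivAt t h1
  exact this

lemma continuous_mvc_mexp {n : ℕ} (A : Matrix (Fin n) (Fin n) ℂ) :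
    Continuous fun u : ℝ => mvc (mexp (u • A)) :=
  continuous_iff_continuousAt.2 fun t => (hasDerivAt_mvc_mexp A t).continuousAt

lemma I1_hasFDerivAt {m p : ℕ} (A_c : Matrix (Fin m) (Fin m) ℂ) (A_s : Matrix (Fin p) (Fin p) ℂ)
    {G : (Fin m → ℂ) → (Fin p → ℂ)} (hG : ContDiff ℝ 1 G) (τ : ℝ) (X : Fin m → ℂ) :
    HasFDerivAt
      (fun Y => ∫ s in (-τ)..0, (mexp ((-s) • A_s)).mulVec (G ((mexp (s • A_c)).mulVec Y)))
      (∫ s in (-τ)..0,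
        (mvc (mexp ((-s) • A_s))).comp
          ((fderiv ℝ G ((mexp (s • A_c)).mulVec X)).comp (mvc (mexp (s • A_c))))) X := by
  have hcont1 : Continuous fun s : ℝ => mvc (mexp ((-s) • A_s)) :=
    (continuous_mvc_mexp A_s).comp continuous_neg
  have hcont2 : Continuous fun s : ℝ => mvc (mexp (s • A_c)) := continuous_mvc_mexp A_c
  set F' : (Fin m → ℂ) → ℝ → ((Fin m → ℂ) →L[ℝ] (Fin p → ℂ)) := fun x s =>
    (mvc (mexp ((-s) • A_s))).comp
      ((fderiv ℝ G ((mexp (s • A_c)).mulVec x)).comp (mvc (mexp (s • A_c)))) with hF'def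
  have hFx : ∀ x : Fin m → ℂ,
      Continuous fun s : ℝ => (mexp ((-s) • A_s)).mulVec (G ((mexp (s • A_c)).mulVec x)) := by
    intro x
    have h0 : Continuous fun s : ℝ => G ((mexp (s • A_c)).mulVec x) := by
      have := hcont2.clm_apply (continuous_const (y := x))
      exact hG.continuous.comp (by simpa using this)
    have := hcont1.clm_apply h0
    simpa using this
  have hF'cont : Continuous fun q : ℝ × (Fin m → ℂ) => F' q.2 q.1 := by
    have h1 : Continuous fun q : ℝ × (Fin m → ℂ) => mvc (mexp ((-q.1) • A_s)) :=
      hcont1.comp continuous_fst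
    have h2 : Continuous fun q : ℝ × (Fin m → ℂ) => mvc (mexp (q.1 • A_c)) :=
      hcont2.comp continuous_fst
    have h3 : Continuous fun q : ℝ × (Fin m → ℂ) => fderiv ℝ G ((mexp (q.1 • A_c)).mulVec q.2) := by
      have h4 : Continuous fun q : ℝ × (Fin m → ℂ) => (mexp (q.1 • A_c)).mulVec q.2 := by
        have := h2.clm_apply continuous_snd; simpa using this
      exact (hG.continuous_fderiv one_ne_zero).comp h4
    exact h1.clm_comp (h3.clm_comp h2)
  obtain ⟨C, hC⟩ := (isCompact_uIcc (a := -τ) (b := 0)).prod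
    (isCompact_closedBall X 1) |>.exists_bound_of_continuousOn hF'cont.continuousOn
  refine intervalIntegral.hasFDerivAt_integral_of_dominated_of_fderiv_le
    (F' := F') (bound := fun _ => C) (Metric.ball_mem_nhds X zero_lt_one)
    (Filter.Eventually.of_forall fun x => (hFx x).aestronglyMeasurable)
    ((hFx X).intervalIntegrable _ _)
    ?_ ?_ intervalIntegrable_const ?_
  · exact Continuous.aestronglyMeasurable <| by
      have : Continuous fun s : ℝ => F' X s := by
        have := hF'cont.comp (Continuous.prodMk continuous_id (continuous_const (y := X)))
        exact this
      exact this
  · refine Filter.Eventually.of_forall fun s hs x hx => ?_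
    exact hC (s, x) ⟨Set.uIoc_subset_uIcc hs, Metric.ball_subset_closedBall hx⟩
  · refine Filter.Eventually.of_forall fun s _ x _ => ?_
    have hGd : HasFDerivAt G (fderiv ℝ G ((mexp (s • A_c)).mulVec x)) ((mexp (s • A_c)).mulVec x) :=
      (hG.differentiable one_ne_zero _).hasFDerivAt
    have hin : HasFDerivAt (fun y : Fin m → ℂ => (mexp (s • A_c)).mulVec y)
        (mvc (mexp (s • A_c))) x := (mvc (mexp (s • A_c))).hasFDerivAt
    have hout : HasFDerivAt (fun z : Fin p → ℂ => (mexp ((-s) • A_s)).mulVec z)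
        (mvc (mexp ((-s) • A_s))) (G ((mexp (s • A_c)).mulVec x)) :=
      (mvc (mexp ((-s) • A_s))).hasFDerivAt
    exact hout.comp x ((hGd.comp x hin))

/-- The finite-`τ` backward–forward parameterization
`Φ_τ(X,t) = ∫_{−τ}^0 e^{−sA_s} G(e^{sA_c}X) ds + ∫_{−τ}^0 e^{−sA_s} F_s(s+t) ds`
is differentiable in `X` and in `t`, and satisfies the homological equation
`∂_t Φ_τ + D_X Φ_τ [A_c X] − A_s Φ_τ = G(X) − e^{τA_s} G(e^{−τA_c}X) + F_s(t) − e^{τA_s} F_s(t−τ)`. -/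
theorem bf_parameterization_homological_equation
    (m p : ℕ) (hm : 0 < m) (hp : 0 < p)
    (A_c : Matrix (Fin m) (Fin m) ℂ) (A_s : Matrix (Fin p) (Fin p) ℂ)
    (G : (Fin m → ℂ) → (Fin p → ℂ)) (hG : ContDiff ℝ 1 G)
    (F_s : ℝ → (Fin p → ℂ)) (hF : Continuous F_s)
    (τ : ℝ) (hτ : 0 ≤ τ)
    (Φ : (Fin m → ℂ) → ℝ → (Fin p → ℂ))
    (hΦ : ∀ X t, Φ X t =
      (∫ s in (-τ)..0, (mexp ((-s) • A_s)).mulVec (G ((mexp (s • A_c)).mulVec X)))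
        + ∫ s in (-τ)..0, (mexp ((-s) • A_s)).mulVec (F_s (s + t))) :
    ∀ (X : Fin m → ℂ) (t : ℝ),
      DifferentiableAt ℝ (fun Y => Φ Y t) X ∧
      DifferentiableAt ℝ (fun u => Φ X u) t ∧
      deriv (fun u => Φ X u) t
        + fderiv ℝ (fun Y => Φ Y t) X (A_c.mulVec X)
        - A_s.mulVec (Φ X t)
      = G X - (mexp (τ • A_s)).mulVec (G ((mexp ((-τ) • A_c)).mulVec X))
        + F_s t - (mexp (τ • A_s)).mulVec (F_s (t - τ)) := by
  intro X t
  set I₁ : (Fin m → ℂ) → (Fin p → ℂ) := fun Y =>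
    ∫ s in (-τ)..0, (mexp ((-s) • A_s)).mulVec (G ((mexp (s • A_c)).mulVec Y)) with hI₁def
  set I₂ : ℝ → (Fin p → ℂ) := fun u =>
    ∫ s in (-τ)..0, (mexp ((-s) • A_s)).mulVec (F_s (s + u)) with hI₂def
  have hΦ' : ∀ Y u, Φ Y u = I₁ Y + I₂ u := hΦ
  have hc1 : Continuous fun v : ℝ => mvc (mexp ((-v) • A_s)) :=
    (continuous_mvc_mexp A_s).comp continuous_neg
  have hc2 : Continuous fun v : ℝ => mvc (mexp (v • A_c)) := continuous_mvc_mexp A_c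
  set g₁ : ℝ → (Fin p → ℂ) := fun v =>
    mvc (mexp ((-v) • A_s)) (G (mvc (mexp (v • A_c)) X)) with hg₁def
  set h₂ : ℝ → (Fin p → ℂ) := fun v => mvc (mexp ((-v) • A_s)) (F_s v) with hh₂def
  have hg₁c : Continuous g₁ :=
    hc1.clm_apply (hG.continuous.comp (hc2.clm_apply continuous_const))
  have hh₂c : Continuous h₂ := hc1.clm_apply hF
  set H₁ : ℝ → (Fin p → ℂ) := fun x => ∫ v in (0:ℝ)..x, g₁ v with hH₁def
  set H₂ : ℝ → (Fin p → ℂ) := fun x => ∫ v in (0:ℝ)..x, h₂ v with hH₂def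
  have hK₁ : ∀ r : ℝ, (∫ v in (r - τ)..r, g₁ v) = H₁ r - H₁ (r - τ) := by
    intro r
    rw [eq_sub_iff_add_eq, add_comm]
    exact integral_add_adjacent_intervals (hg₁c.intervalIntegrable _ _)
      (hg₁c.intervalIntegrable _ _)
  have hK₂ : ∀ r : ℝ, (∫ v in (r - τ)..r, h₂ v) = H₂ r - H₂ (r - τ) := by
    intro r
    rw [eq_sub_iff_add_eq, add_comm]
    exact integral_add_adjacent_intervals (hh₂c.intervalIntegrable _ _)
      (hh₂c.intervalIntegrable _ _)
  -- representation of I₂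
  have rep2 : ∀ u : ℝ, I₂ u = mvc (mexp (u • A_s)) (H₂ u - H₂ (u - τ)) := by
    intro u
    have step : ∀ s : ℝ, (mexp ((-s) • A_s)).mulVec (F_s (s + u))
        = mvc (mexp (u • A_s)) (h₂ (s + u)) := by
      intro s
      simp only [hh₂def, mvc_apply, Matrix.mulVec_mulVec, ← mexp_add_mul]
      rw [show u + -(s + u) = -s by ring]
    calc I₂ u = ∫ s in (-τ)..0, mvc (mexp (u • A_s)) (h₂ (s + u)) :=
          integral_congr fun s _ => step s
      _ = ∫ v in (-τ + u)..(0 + u), mvc (mexp (u • A_s)) (h₂ v) :=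
          integral_comp_add_right (fun v => mvc (mexp (u • A_s)) (h₂ v)) u
      _ = mvc (mexp (u • A_s)) (∫ v in (u - τ)..u, h₂ v) := by
          rw [show -τ + u = u - τ by ring, zero_add]
          exact (mvc (mexp (u • A_s))).intervalIntegral_comp_comm
            (hh₂c.intervalIntegrable _ _)
      _ = mvc (mexp (u • A_s)) (H₂ u - H₂ (u - τ)) := by rw [hK₂ u]
  -- derivative of I₂
  have hH₂d : ∀ r : ℝ, HasDerivAt H₂ (h₂ r) r := fun r =>
    (hh₂c.integral_hasStrictDerivAt 0 r).hasDerivAt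
  have hK₂d : HasDerivAt (fun x : ℝ => H₂ x - H₂ (x - τ)) (h₂ t - h₂ (t - τ)) t := by
    have hsub : HasDerivAt (fun x : ℝ => x - τ) 1 t := (hasDerivAt_id t).sub_const τ
    have h2 : HasDerivAt (fun x : ℝ => H₂ (x - τ)) (h₂ (t - τ)) t := by
      have := (hH₂d (t - τ)).scomp t hsub
      rw [one_smul] at this; exact this
    exact (hH₂d t).sub h2
  have hI₂d : HasDerivAt I₂
      (mvc (mexp (t • A_s) * A_s) (H₂ t - H₂ (t - τ))
        + mvc (mexp (t • A_s)) (h₂ t - h₂ (t - τ))) t := by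
    have := (hasDerivAt_mvc_mexp A_s t).clm_apply hK₂d
    exact this.congr_of_eventuallyEq (Filter.Eventually.of_forall rep2)
  -- the t-direction facts
  have hΦX : (fun u => Φ X u) = fun u => I₁ X + I₂ u := funext fun u => hΦ' X u
  have hdiff_t : DifferentiableAt ℝ (fun u => Φ X u) t := by
    rw [hΦX]
    exact (differentiableAt_const _).add hI₂d.differentiableAt
  have hderiv_t : deriv (fun u => Φ X u) t
      = mvc (mexp (t • A_s) * A_s) (H₂ t - H₂ (t - τ))
        + mvc (mexp (t • A_s)) (h₂ t - h₂ (t - τ)) := by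
    rw [hΦX, deriv_const_add]
    exact hI₂d.deriv
  -- the X-direction facts
  have hI1 : HasFDerivAt I₁
      (∫ s in (-τ)..0,
        (mvc (mexp ((-s) • A_s))).comp
          ((fderiv ℝ G ((mexp (s • A_c)).mulVec X)).comp (mvc (mexp (s • A_c))))) X :=
    I1_hasFDerivAt A_c A_s hG τ X
  have hΦt : (fun Y => Φ Y t) = fun Y => I₁ Y + I₂ t := funext fun Y => hΦ' Y t
  have hdiff_X : DifferentiableAt ℝ (fun Y => Φ Y t) X := by
    rw [hΦt]
    exact hI1.differentiableAt.add_const _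
  have hfd : fderiv ℝ (fun Y => Φ Y t) X
      = ∫ s in (-τ)..0,
        (mvc (mexp ((-s) • A_s))).comp
          ((fderiv ℝ G ((mexp (s • A_c)).mulVec X)).comp (mvc (mexp (s • A_c)))) := by
    rw [hΦt, fderiv_add_const]
    exact hI1.fderiv
  -- the combined curve
  have hcurve : HasDerivAt (fun r : ℝ => mvc (mexp (r • A_c)) X) (A_c.mulVec X) 0 := by
    have := (hasDerivAt_mvc_mexp A_c 0).clm_apply (hasDerivAt_const 0 X)
    simpa using this
  have hX0 : mvc (mexp ((0:ℝ) • A_c)) X = X := by simp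
  have hJ₁a : HasDerivAt (fun r : ℝ => I₁ (mvc (mexp (r • A_c)) X))
      ((∫ s in (-τ)..0,
        (mvc (mexp ((-s) • A_s))).comp
          ((fderiv ℝ G ((mexp (s • A_c)).mulVec X)).comp (mvc (mexp (s • A_c)))))
        (A_c.mulVec X)) 0 := by
    have hf : HasFDerivAt I₁
        (∫ s in (-τ)..0,
          (mvc (mexp ((-s) • A_s))).comp
            ((fderiv ℝ G ((mexp (s • A_c)).mulVec X)).comp (mvc (mexp (s • A_c)))))
        ((fun r : ℝ => mvc (mexp (r • A_c)) X) 0) := by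
      show HasFDerivAt I₁ _ (mvc (mexp ((0:ℝ) • A_c)) X)
      rw [hX0]; exact hI1
    exact hf.comp_hasDerivAt 0 hcurve
  -- representation of r ↦ I₁(e^{rA_c}X)
  have rep1 : ∀ r : ℝ, I₁ (mvc (mexp (r • A_c)) X)
      = mvc (mexp (r • A_s)) (H₁ r - H₁ (r - τ)) := by
    intro r
    have step : ∀ s : ℝ,
        (mexp ((-s) • A_s)).mulVec (G ((mexp (s • A_c)).mulVec (mvc (mexp (r • A_c)) X)))
        = mvc (mexp (r • A_s)) (g₁ (s + r)) := by
      intro s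
      simp only [hg₁def, mvc_apply, Matrix.mulVec_mulVec, ← mexp_add_mul]
      rw [show r + -(s + r) = -s by ring]
    calc I₁ (mvc (mexp (r • A_c)) X)
        = ∫ s in (-τ)..0, mvc (mexp (r • A_s)) (g₁ (s + r)) :=
          integral_congr fun s _ => step s
      _ = ∫ v in (-τ + r)..(0 + r), mvc (mexp (r • A_s)) (g₁ v) :=
          integral_comp_add_right (fun v => mvc (mexp (r • A_s)) (g₁ v)) r
      _ = mvc (mexp (r • A_s)) (∫ v in (r - τ)..r, g₁ v) := by
          rw [show -τ + r = r - τ by ring, zero_add]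
          exact (mvc (mexp (r • A_s))).intervalIntegral_comp_comm
            (hg₁c.intervalIntegrable _ _)
      _ = mvc (mexp (r • A_s)) (H₁ r - H₁ (r - τ)) := by rw [hK₁ r]
  have hH₁d : ∀ r : ℝ, HasDerivAt H₁ (g₁ r) r := fun r =>
    (hg₁c.integral_hasStrictDerivAt 0 r).hasDerivAt
  have hK₁d : HasDerivAt (fun x : ℝ => H₁ x - H₁ (x - τ)) (g₁ 0 - g₁ (0 - τ)) 0 := by
    have hsub : HasDerivAt (fun x : ℝ => x - τ) 1 0 := (hasDerivAt_id 0).sub_const τ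
    have h2 : HasDerivAt (fun x : ℝ => H₁ (x - τ)) (g₁ (0 - τ)) 0 := by
      have := (hH₁d (0 - τ)).scomp 0 hsub
      rw [one_smul] at this; exact this
    exact (hH₁d 0).sub h2
  have hJ₁b : HasDerivAt (fun r : ℝ => I₁ (mvc (mexp (r • A_c)) X))
      (mvc (mexp ((0:ℝ) • A_s) * A_s) (H₁ 0 - H₁ (0 - τ))
        + mvc (mexp ((0:ℝ) • A_s)) (g₁ 0 - g₁ (0 - τ))) 0 := by
    have := (hasDerivAt_mvc_mexp A_s 0).clm_apply hK₁d
    exact this.congr_of_eventuallyEq (Filter.Eventually.of_forall rep1)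
  have huniq := hJ₁a.unique hJ₁b
  refine ⟨hdiff_X, hdiff_t, ?_⟩
  rw [hderiv_t, hfd, huniq, hΦ' X t]
  -- value-level simplifications
  have e1 : I₁ X = H₁ 0 - H₁ (0 - τ) := by
    have h := rep1 0
    rw [hX0, mexp_zero_smul] at h
    rw [h]
    simp [Matrix.one_mulVec]
  have e2 : I₂ t = mvc (mexp (t • A_s)) (H₂ t - H₂ (t - τ)) := rep2 t
  have e3 : mvc (mexp (t • A_s) * A_s) (H₂ t - H₂ (t - τ))
      = A_s.mulVec (mvc (mexp (t • A_s)) (H₂ t - H₂ (t - τ))) := by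
    rw [mexp_comm]
    simp [Matrix.mulVec_mulVec]
  have e4 : mvc (mexp (t • A_s)) (h₂ t - h₂ (t - τ))
      = F_s t - (mexp (τ • A_s)).mulVec (F_s (t - τ)) := by
    rw [map_sub]
    congr 1
    · simp only [hh₂def, mvc_apply, Matrix.mulVec_mulVec, ← mexp_add_mul]
      rw [show t + -t = 0 by ring]
      simp [Matrix.one_mulVec]
    · simp only [hh₂def, mvc_apply, Matrix.mulVec_mulVec, ← mexp_add_mul]
      rw [show t + -(t - τ) = τ by ring]
  have e5 : mvc (mexp ((0:ℝ) • A_s) * A_s) (H₁ 0 - H₁ (0 - τ))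
      = A_s.mulVec (H₁ 0 - H₁ (0 - τ)) := by
    simp
  have e6 : mvc (mexp ((0:ℝ) • A_s)) (g₁ 0 - g₁ (0 - τ))
      = G X - (mexp (τ • A_s)).mulVec (G ((mexp ((-τ) • A_c)).mulVec X)) := by
    have hg0 : g₁ 0 = G X := by simp [hg₁def]
    have hgτ : g₁ (0 - τ) = (mexp (τ • A_s)).mulVec (G ((mexp ((-τ) • A_c)).mulVec X)) := by
      simp only [hg₁def, mvc_apply]
      rw [show -(0 - τ) = τ by ring, show (0:ℝ) - τ = -τ by ring]
    rw [mexp_zero_smul, hg0, hgτ]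
    simp [Matrix.one_mulVec]
  rw [e1, e2, e3, e4, e5, e6, Matrix.mulVec_add]
  abel
end

section
/- Let N, k, m_c be integers with k ≥ 1 and 1 ≤ m_c < N. Let λ_1, …, λ_N ∈ ℂ and A = diag(λ_1,…,λ_N) on ℂ^N with standard basis e_1,…,e_N. Let Π_c be the projection zeroing coordinates m_c+1,…,N, Π_s = I − Π_c, A_c = Π_c A, A_s = Π_s A, and H_c = range(Π_c). Let G_k : (ℂ^N)^k → ℂ^N be k-multilinear with coefficients G^n_{j_1⋯j_k} = (G_k(e_{j_1},…,e_{j_k}))_n. Assume Re λ_n < 0 for all n > m_c, and that for every n > m_c, every tuple (j_1,…,j_k) ∈ {1,…,m_c}^k with G^n_{j_1⋯j_k} ≠ 0, and every subset S ⊆ {1,…,k}, Re(λ_n − Σ_{p∈S} λ_{j_p}) < 0. Let F ∈ ℂ^N, and for X ∈ H_c let p_X(s) = e^{sA_c}X − ∫_s^0 e^{(s−s′)A_c} Π_c F ds′. For τ ≥ 0 set q_{X,τ} = ∫_{−τ}^{0} e^{−s A_s} ( Π_s G_k(p_X(s),…,p_X(s)) + Π_s F ) ds, and let 𝔍_F(X)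 = ∫_{−∞}^{0} e^{−s A_s} ( Π_s G_k(p_X(s),…,p_X(s)) + Π_s F ) ds. Then for every X ∈ H_c, lim_{τ→∞} ‖q_{X,τ} − 𝔍_F(X)‖ = 0. -/
open MeasureTheory intervalIntegral Filter

/-- Projection of `ℂ^N` keeping only the first `m_c` (resolved) coordinates. -/
def projC (N m_c : ℕ) (v : Fin N → ℂ) : Fin N → ℂ :=
  fun i => if (i : ℕ) < m_c then v i else 0

/-- Projection of `ℂ^N` onto the unresolved coordinates `m_c, …, N−1` (0-indexed). -/
def projS (N m_c : ℕ) (v : Fin N → ℂ) : Fin N → ℂ :=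
  fun i => if (i : ℕ) < m_c then 0 else v i

/-- The resolved subspace `H_c` of `ℂ^N`: vectors whose unresolved coordinates vanish. -/
def resolvedSubspace (N m_c : ℕ) : Set (Fin N → ℂ) :=
  {X | ∀ i : Fin N, m_c ≤ (i : ℕ) → X i = 0}

lemma aux_integrableOn_exp_mul_Iic {ε : ℝ} (hε : 0 < ε) :
    IntegrableOn (fun s : ℝ => Real.exp (ε * s)) (Set.Iic (0:ℝ)) := by
  have h2 : IntegrableOn (fun x : ℝ => Real.exp (-ε * x)) (Set.Ici (0:ℝ)) := by
    rw [integrableOn_Ici_iff_integrableOn_Ioi]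
    exact exp_neg_integrableOn_Ioi 0 hε
  have h3 : Integrable ((Set.Ici 0).indicator fun x : ℝ => Real.exp (-ε * x)) volume := by
    rwa [integrable_indicator_iff measurableSet_Ici]
  have h4 := h3.comp_neg
  have h5 : Integrable ((Set.Iic (0:ℝ)).indicator fun s => Real.exp (ε * s)) volume := by
    convert h4 using 1
    funext x
    by_cases hx : x ≤ (0:ℝ)
    · rw [Set.indicator_of_mem (Set.mem_Iic.mpr hx), Set.indicator_of_mem (by simpa using hx)]
      ring_nf
    · rw [Set.indicator_of_notMem (by simpa using hx),
        Set.indicator_of_notMem (by simp; linarith [lt_of_not_ge hx])]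
  exact (integrable_indicator_iff measurableSet_Iic).mp h5

lemma aux_pow_le_exp {ε : ℝ} (hε : 0 < ε) {k : ℕ} (hk : 1 ≤ k) {s : ℝ} (hs : s ≤ 0) :
    (1 - s)^k ≤ (max 1 (2*k/ε))^k * Real.exp (-(ε/2) * s) := by
  set M : ℝ := max 1 (2*k/ε) with hM
  have hk0 : (0:ℝ) < k := by exact_mod_cast hk
  have hM1 : (1:ℝ) ≤ M := le_max_left _ _
  have hM2 : 2*k/ε ≤ M := le_max_right _ _
  have hu : 0 ≤ (ε/2) * (-s) := mul_nonneg (by positivity) (neg_nonneg.mpr hs)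
  set u : ℝ := (ε/2) * (-s) with hu'
  have h1 : 1 - s ≤ M * (1 + u / k) := by
    have hMk : 1 ≤ M * (ε / (2*k)) := by
      have h2k : (0:ℝ) < 2*k := by nlinarith
      have h := mul_le_mul_of_nonneg_right hM2 (le_of_lt (div_pos hε h2k))
      calc (1:ℝ) = (2*k/ε) * (ε/(2*k)) := by field_simp
        _ ≤ M * (ε/(2*k)) := h
    have hud : u / k = (ε/(2*k)) * (-s) := by field_simp [hu']; rw [hu']; ring
    have : -s ≤ M * (u / k) := by
      rw [hud, ← mul_assoc]
      nlinarith [neg_nonneg.mpr hs]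
    nlinarith
  have h2 : (1 - s)^k ≤ (M * (1 + u/k))^k := by
    apply pow_le_pow_left₀ (by linarith) h1
  have h3 : (1 + u/k)^k ≤ Real.exp u := by
    have := Real.add_one_le_exp (u/k)
    calc (1 + u/k)^k ≤ (Real.exp (u/k))^k := by
          apply pow_le_pow_left₀ (by positivity) (by linarith)
      _ = Real.exp (k * (u/k)) := by rw [← Real.exp_nat_mul]
      _ = Real.exp u := by rw [mul_div_cancel₀]; positivity
  have h4 : Real.exp u = Real.exp (-(ε/2) * s) := by rw [hu']; ring_nf
  calc (1-s)^k ≤ (M * (1+u/k))^k := h2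
    _ = M^k * (1+u/k)^k := mul_pow _ _ _
    _ ≤ M^k * Real.exp u := by
        apply mul_le_mul_of_nonneg_left h3 (by positivity)
    _ = M^k * Real.exp (-(ε/2)*s) := by rw [h4]

lemma aux_integrable_of_bound {f : ℝ → ℂ}
    (hf : AEStronglyMeasurable f (volume.restrict (Set.Iic (0:ℝ))))
    {C ε : ℝ} (hε : 0 < ε) {k : ℕ} (hk : 1 ≤ k)
    (hb : ∀ s : ℝ, s ≤ 0 → ‖f s‖ ≤ C * ((1 - s)^k * Real.exp (ε * s))) :
    IntegrableOn f (Set.Iic (0:ℝ)) := by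
  have hC : 0 ≤ C := by
    have h0 := hb 0 le_rfl
    simp only [sub_zero, one_pow, mul_zero, Real.exp_zero, mul_one, one_mul] at h0
    exact le_trans (norm_nonneg _) h0
  set M : ℝ := max 1 (2*k/ε) with hM
  apply Integrable.mono' ((aux_integrableOn_exp_mul_Iic (half_pos hε)).const_mul (C * M^k)) hf
  filter_upwards [ae_restrict_mem measurableSet_Iic] with s hs
  have hs0 : s ≤ 0 := hs
  have h1 := hb s hs0
  have h2 := aux_pow_le_exp hε hk hs0
  have h3 : (1-s)^k * Real.exp (ε * s) ≤ M^k * Real.exp (ε/2 * s) := by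
    have := mul_le_mul_of_nonneg_right h2 (le_of_lt (Real.exp_pos (ε*s)))
    calc (1-s)^k * Real.exp (ε*s) ≤ M^k * Real.exp (-(ε/2)*s) * Real.exp (ε*s) := this
      _ = M^k * Real.exp (ε/2 * s) := by rw [mul_assoc, ← Real.exp_add]; ring_nf
  calc ‖f s‖ ≤ C * ((1-s)^k * Real.exp (ε*s)) := h1
    _ ≤ C * (M^k * Real.exp (ε/2*s)) := mul_le_mul_of_nonneg_left h3 hC
    _ = C * M^k * Real.exp (ε/2*s) := by ring

lemma mexp_smul_diagonal {N : ℕ} (t : ℝ) (d : Fin N → ℂ) :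
    mexp (t • Matrix.diagonal d) = Matrix.diagonal (fun i => Complex.exp ((t:ℂ) * d i)) := by
  rw [mexp, ← Matrix.diagonal_smul, Matrix.exp_diagonal]
  congr 1
  funext i
  rw [Pi.exp_def]
  simp only [Pi.smul_apply, Complex.real_smul, ← Complex.exp_eq_exp_ℂ]

/-- The finite-`τ` backward–forward parameterization `q_{X,τ}` converges, as the
backward integration time `τ → ∞`, to the Lyapunov–Perron integral `𝔍_F(X)`. -/
theorem bf_parameterization_tendsto_lyapunov_perron
    (N k m_c : ℕ) (hk : 1 ≤ k) (hmc : 1 ≤ m_c) (hmcN : m_c < N)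
    (lam : Fin N → ℂ)
    (A_c A_s : Matrix (Fin N) (Fin N) ℂ)
    (hAc : A_c = Matrix.diagonal (fun i : Fin N => if (i : ℕ) < m_c then lam i else 0))
    (hAs : A_s = Matrix.diagonal (fun i : Fin N => if (i : ℕ) < m_c then 0 else lam i))
    (G_k : MultilinearMap ℂ (fun _ : Fin k => (Fin N → ℂ)) (Fin N → ℂ))
    (hstable : ∀ n : Fin N, m_c ≤ (n : ℕ) → (lam n).re < 0)
    (hNR : ∀ n : Fin N, m_c ≤ (n : ℕ) →
      ∀ j : Fin k → Fin N, (∀ q : Fin k, ((j q : ℕ) < m_c)) →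
        (G_k fun q => Pi.single (j q) (1 : ℂ)) n ≠ 0 →
        ∀ S : Finset (Fin k), (lam n - ∑ q ∈ S, lam (j q)).re < 0)
    (F : Fin N → ℂ)
    (pX : (Fin N → ℂ) → ℝ → (Fin N → ℂ))
    (hpX : ∀ (X : Fin N → ℂ) (s : ℝ), pX X s = (mexp (s • A_c)).mulVec X
      - ∫ s' in s..0, (mexp ((s - s') • A_c)).mulVec (projC N m_c F))
    (q : (Fin N → ℂ) → ℝ → (Fin N → ℂ))
    (hq : ∀ (X : Fin N → ℂ) (τ : ℝ), q X τ = ∫ s in (-τ)..0,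
      (mexp ((-s) • A_s)).mulVec (projS N m_c (G_k fun _ => pX X s) + projS N m_c F))
    (J : (Fin N → ℂ) → (Fin N → ℂ))
    (hJ : ∀ X : Fin N → ℂ, J X = ∫ s in Set.Iic (0 : ℝ),
      (mexp ((-s) • A_s)).mulVec (projS N m_c (G_k fun _ => pX X s) + projS N m_c F)) :
    ∀ X ∈ resolvedSubspace N m_c,
      Tendsto (fun τ : ℝ => ‖q X τ - J X‖) atTop (nhds 0) := by
  intro X hX
  have hX' : ∀ i : Fin N, m_c ≤ (i : ℕ) → X i = 0 := hX
  set dc : Fin N → ℂ := fun i : Fin N => if (i : ℕ) < m_c then lam i else 0 with hdc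
  set ds : Fin N → ℂ := fun i : Fin N => if (i : ℕ) < m_c then 0 else lam i with hds
  set f : ℝ → (Fin N → ℂ) := fun s =>
    (mexp ((-s) • A_s)).mulVec (projS N m_c (G_k fun _ => pX X s) + projS N m_c F) with hf
  -- componentwise description of f
  have hfc : ∀ (s : ℝ) (n : Fin N), f s n =
      Complex.exp (((-s : ℝ) : ℂ) * ds n) *
        (projS N m_c (G_k fun _ => pX X s) n + projS N m_c F n) := by
    intro s n
    simp only [hf]
    rw [hAs, mexp_smul_diagonal, Matrix.mulVec_diagonal]
    rfl
  -- interval integrability of the forcing integrand in pX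
  have hInt : ∀ s : ℝ, IntervalIntegrable
      (fun s' => (mexp ((s - s') • A_c)).mulVec (projC N m_c F)) volume s 0 := by
    intro s
    apply Continuous.intervalIntegrable
    have hfun : (fun s' => (mexp ((s - s') • A_c)).mulVec (projC N m_c F))
        = fun s' (i : Fin N) => Complex.exp (((s - s' : ℝ) : ℂ) * dc i) * projC N m_c F i := by
      funext s'
      rw [hAc, mexp_smul_diagonal]
      funext i
      rw [Matrix.mulVec_diagonal]
    rw [hfun]
    apply continuous_pi
    intro i
    fun_prop
  -- componentwise formula for pX
  have hpXc : ∀ (s : ℝ) (i : Fin N), pX X s i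
      = Complex.exp ((s : ℂ) * dc i) * X i
        - ∫ s' in s..0, Complex.exp (((s - s' : ℝ) : ℂ) * dc i) * projC N m_c F i := by
    intro s i
    have h2 : pX X s i = ((mexp (s • A_c)).mulVec X) i
        - (∫ s' in s..0, (mexp ((s - s') • A_c)).mulVec (projC N m_c F)) i := by
      rw [hpX X s]; rfl
    rw [h2, hAc, mexp_smul_diagonal, Matrix.mulVec_diagonal]
    congr 1
    have h3 := (ContinuousLinearMap.proj (R := ℂ) (φ := fun _ : Fin N => ℂ) i).intervalIntegral_comp_comm
      (hInt s)
    rw [ContinuousLinearMap.proj_apply, hAc] at h3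
    rw [← h3]
    apply intervalIntegral.integral_congr
    intro s' _
    simp only [ContinuousLinearMap.proj_apply]
    rw [mexp_smul_diagonal, Matrix.mulVec_diagonal]
  -- pX vanishes on stable coordinates
  have hpXs : ∀ (s : ℝ) (i : Fin N), m_c ≤ (i : ℕ) → pX X s i = 0 := by
    intro s i hi
    rw [hpXc s i]
    have h1 : dc i = 0 := by simp [hdc, not_lt.mpr hi]
    have h2 : projC N m_c F i = 0 := by simp [projC, not_lt.mpr hi]
    rw [h1, h2, hX' i hi]
    simp
  -- bound on pX components
  have hpXb : ∀ (s : ℝ), s ≤ 0 → ∀ i : Fin N,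
      ‖pX X s i‖ ≤ (‖X i‖ + ‖F i‖) * (1 - s) * max 1 (Real.exp (s * (dc i).re)) := by
    intro s hs i
    rw [hpXc s i]
    refine le_trans (norm_sub_le _ _) ?_
    have hmax1 : (1:ℝ) ≤ max 1 (Real.exp (s * (dc i).re)) := le_max_left _ _
    have hterm1 : ‖Complex.exp ((s:ℂ) * dc i) * X i‖
        ≤ max 1 (Real.exp (s * (dc i).re)) * ‖X i‖ := by
      rw [norm_mul, Complex.norm_exp]
      refine mul_le_mul_of_nonneg_right ?_ (norm_nonneg _)
      have hre : ((s:ℂ) * dc i).re = s * (dc i).re := by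
        simp [Complex.mul_re]
      rw [hre]
      exact le_max_right _ _
    have hexp_le : ∀ s' ∈ Set.Ioc s 0, Real.exp ((s - s') * (dc i).re)
        ≤ max 1 (Real.exp (s * (dc i).re)) := by
      intro s' hs'
      rcases le_or_gt 0 ((dc i).re) with h | h
      · refine le_trans ?_ (le_max_left _ _)
        rw [← Real.exp_zero]
        apply Real.exp_le_exp.mpr
        have h1 : s - s' ≤ 0 := by linarith [hs'.1]
        nlinarith
      · refine le_trans ?_ (le_max_right _ _)
        apply Real.exp_le_exp.mpr
        have h1 : s ≤ s - s' := by linarith [hs'.2]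
        nlinarith
    have hterm2 : ‖∫ s' in s..0, Complex.exp (((s - s' : ℝ) : ℂ) * dc i) * projC N m_c F i‖
        ≤ max 1 (Real.exp (s * (dc i).re)) * ‖F i‖ * |(0:ℝ) - s| := by
      apply intervalIntegral.norm_integral_le_of_norm_le_const
      intro s' hs'
      rw [Set.uIoc_of_le hs] at hs'
      rw [norm_mul, Complex.norm_exp]
      have hre : (((s - s' : ℝ) : ℂ) * dc i).re = (s - s') * (dc i).re := by
        simp [Complex.mul_re]
      rw [hre]
      have hF : ‖projC N m_c F i‖ ≤ ‖F i‖ := by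
        by_cases h : (i:ℕ) < m_c <;> simp [projC, h]
      exact mul_le_mul (hexp_le s' hs') hF (norm_nonneg _) (le_trans zero_le_one hmax1)
    have habs : |(0:ℝ) - s| = -s := by
      rw [abs_of_nonneg (by linarith)]; ring
    rw [habs] at hterm2
    have hXn := norm_nonneg (X i)
    have hFn := norm_nonneg (F i)
    nlinarith [hterm1, hterm2, hmax1, neg_nonneg.mpr hs,
      mul_nonneg (le_trans zero_le_one hmax1) hFn,
      mul_nonneg (mul_nonneg (le_trans zero_le_one hmax1) hXn) (neg_nonneg.mpr hs)]
  -- continuity of pX components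
  have hE : ∀ i : Fin N, Continuous (fun s : ℝ => ∫ s' in s..(0:ℝ),
      Complex.exp (((-s' : ℝ) : ℂ) * dc i)) := by
    intro i
    have hc : Continuous (fun s' : ℝ => Complex.exp (((-s' : ℝ) : ℂ) * dc i)) := by fun_prop
    have h1 : Continuous (fun s : ℝ => ∫ s' in (0:ℝ)..s, Complex.exp (((-s' : ℝ) : ℂ) * dc i)) :=
      intervalIntegral.continuous_primitive (fun a b => hc.intervalIntegrable a b) 0
    have h2 : (fun s : ℝ => ∫ s' in s..(0:ℝ), Complex.exp (((-s' : ℝ) : ℂ) * dc i))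
        = fun s => -(∫ s' in (0:ℝ)..s, Complex.exp (((-s' : ℝ) : ℂ) * dc i)) := by
      funext s; rw [intervalIntegral.integral_symm]
    rw [h2]; exact h1.neg
  have hpXcont : ∀ i : Fin N, Continuous (fun s => pX X s i) := by
    intro i
    have hform : (fun s => pX X s i) = fun s : ℝ =>
        Complex.exp ((s:ℂ) * dc i) * X i
        - Complex.exp ((s:ℂ) * dc i) * projC N m_c F i
            * (∫ s' in s..(0:ℝ), Complex.exp (((-s' : ℝ) : ℂ) * dc i)) := by
      funext s
      rw [hpXc s i]
      congr 1
      rw [mul_assoc, ← intervalIntegral.integral_const_mul, ← intervalIntegral.integral_const_mul]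
      apply intervalIntegral.integral_congr
      intro s' _
      simp only []
      rw [show (((s - s' : ℝ)) : ℂ) * dc i = (s:ℂ)*dc i + ((-s' : ℝ) : ℂ)*dc i by push_cast; ring,
        Complex.exp_add]
      ring
    rw [hform]
    have c1 : Continuous fun s : ℝ => Complex.exp ((s:ℂ) * dc i) := by fun_prop
    exact (c1.mul continuous_const).sub ((c1.mul continuous_const).mul (hE i))
  -- multilinear expansion
  set g : (Fin k → Fin N) → (Fin N → ℂ) := fun j => G_k (fun q => Pi.single (j q) (1:ℂ)) with hg
  have hGexp : ∀ v : Fin N → ℂ,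
      G_k (fun _ => v) = ∑ j : Fin k → Fin N, (∏ q, v (j q)) • g j := by
    intro v
    have hv : (fun _ : Fin k => v) = fun _ : Fin k => ∑ i : Fin N, v i • (Pi.single i (1:ℂ) : Fin N → ℂ) := by
      funext _
      funext x
      simp [Pi.single_apply]
    rw [hv, MultilinearMap.map_sum]
    exact Finset.sum_congr rfl fun j _ =>
      MultilinearMap.map_smul_univ G_k (fun q => v (j q)) (fun q => Pi.single (j q) 1)
  -- coordinate formula for f on stable coordinates
  have hfcoord : ∀ (n : Fin N), m_c ≤ (n:ℕ) → ∀ s : ℝ,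
      f s n = (∑ j : Fin k → Fin N,
          Complex.exp (((-s : ℝ) : ℂ) * lam n) * ((∏ q, pX X s (j q)) * g j n))
        + Complex.exp (((-s : ℝ) : ℂ) * lam n) * F n := by
    intro n hn s
    rw [hfc s n]
    have h1 : ds n = lam n := by simp [hds, not_lt.mpr hn]
    have h2 : projS N m_c (G_k fun _ => pX X s) n = (G_k fun _ => pX X s) n := by
      simp [projS, not_lt.mpr hn]
    have h3 : projS N m_c F n = F n := by simp [projS, not_lt.mpr hn]
    rw [h1, h2, h3, hGexp (pX X s), Finset.sum_apply]
    simp only [Pi.smul_apply, smul_eq_mul]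
    rw [mul_add, Finset.mul_sum]
  -- f vanishes on resolved coordinates
  have hzero : ∀ n : Fin N, (n:ℕ) < m_c → ∀ s : ℝ, f s n = 0 := by
    intro n hn s
    rw [hfc s n]
    have h1 : ds n = 0 := by simp [hds, hn]
    have h2 : projS N m_c (G_k fun _ => pX X s) n = 0 := by simp [projS, hn]
    have h3 : projS N m_c F n = 0 := by simp [projS, hn]
    rw [h1, h2, h3]
    simp
  -- integrability of each stable coordinate
  have hstab : ∀ n : Fin N, m_c ≤ (n:ℕ) → IntegrableOn (fun s => f s n) (Set.Iic (0:ℝ)) := by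
    intro n hn
    have hfun : (fun s => f s n) = fun s =>
        (∑ j : Fin k → Fin N,
          Complex.exp (((-s : ℝ) : ℂ) * lam n) * ((∏ q, pX X s (j q)) * g j n))
        + Complex.exp (((-s : ℝ) : ℂ) * lam n) * F n := funext (fun s => hfcoord n hn s)
    rw [hfun]
    apply Integrable.add
    · apply integrable_finset_sum
      intro j _
      by_cases hgj : g j n = 0
      · have hz : (fun s : ℝ => Complex.exp (((-s : ℝ) : ℂ) * lam n)
            * ((∏ q, pX X s (j q)) * g j n)) = fun _ => 0 := by
          funext s; rw [hgj]; ring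
        rw [hz]; exact integrable_zero _ _ _
      by_cases hjlt : ∀ q : Fin k, (j q : ℕ) < m_c
      · -- main case
        set S₀ : Finset (Fin k) := Finset.univ.filter (fun q => (lam (j q)).re < 0) with hS₀
        have hNR' := hNR n hn j hjlt hgj S₀
        have hεpos : 0 < -(lam n - ∑ q ∈ S₀, lam (j q)).re := by linarith
        refine aux_integrable_of_bound
          (C := ‖g j n‖ * ∏ q : Fin k, (‖X (j q)‖ + ‖F (j q)‖)) ?_ hεpos hk ?_
        · apply Continuous.aestronglyMeasurable ?_ |>.restrict
          have c1 : Continuous fun s : ℝ => Complex.exp (((-s : ℝ) : ℂ) * lam n) := by fun_prop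
          exact c1.mul ((continuous_finset_prod _ (fun q _ => hpXcont (j q))).mul continuous_const)
        · intro s hs
          have hprodb : ∏ q : Fin k, ‖pX X s (j q)‖ ≤
              (∏ q : Fin k, (‖X (j q)‖ + ‖F (j q)‖)) * (1-s)^k
                * Real.exp (∑ q ∈ S₀, s * (lam (j q)).re) := by
            have hb1 : ∀ q : Fin k, ‖pX X s (j q)‖ ≤
                (‖X (j q)‖ + ‖F (j q)‖) * (1 - s) * max 1 (Real.exp (s * (lam (j q)).re)) := by
              intro q
              have h := hpXb s hs (j q)
              have hdq : dc (j q) = lam (j q) := by simp [hdc, hjlt q]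
              rwa [hdq] at h
            calc ∏ q : Fin k, ‖pX X s (j q)‖
                ≤ ∏ q : Fin k, ((‖X (j q)‖ + ‖F (j q)‖) * (1-s)
                    * max 1 (Real.exp (s * (lam (j q)).re))) :=
                  Finset.prod_le_prod (fun q _ => norm_nonneg _) (fun q _ => hb1 q)
              _ = (∏ q : Fin k, (‖X (j q)‖ + ‖F (j q)‖)) * (1-s)^k
                    * ∏ q : Fin k, max 1 (Real.exp (s * (lam (j q)).re)) := by
                  rw [Finset.prod_mul_distrib, Finset.prod_mul_distrib, Finset.prod_const,
                    Finset.card_univ, Fintype.card_fin]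
              _ = (∏ q : Fin k, (‖X (j q)‖ + ‖F (j q)‖)) * (1-s)^k
                    * Real.exp (∑ q ∈ S₀, s * (lam (j q)).re) := by
                  congr 1
                  rw [Real.exp_sum, hS₀, Finset.prod_filter]
                  apply Finset.prod_congr rfl
                  intro qq _
                  by_cases hq : (lam (j qq)).re < 0
                  · rw [if_pos hq]
                    apply max_eq_right
                    rw [← Real.exp_zero]
                    apply Real.exp_le_exp.mpr
                    nlinarith
                  · rw [if_neg hq]
                    apply max_eq_left
                    rw [← Real.exp_zero]
                    apply Real.exp_le_exp.mpr
                    have := not_lt.mp hq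
                    nlinarith
          have hexpn : ‖Complex.exp (((-s : ℝ) : ℂ) * lam n)‖ = Real.exp ((-s) * (lam n).re) := by
            rw [Complex.norm_exp]
            congr 1
            simp [Complex.mul_re]
          have hcomb : Real.exp ((-s) * (lam n).re)
              * Real.exp (∑ q ∈ S₀, s * (lam (j q)).re)
              = Real.exp (-(lam n - ∑ q ∈ S₀, lam (j q)).re * s) := by
            have hsum : ∑ q ∈ S₀, s * (lam (j q)).re = s * ∑ q ∈ S₀, (lam (j q)).re := by
              rw [Finset.mul_sum]
            rw [← Real.exp_add]
            congr 1
            rw [hsum, Complex.sub_re, Complex.re_sum]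
            ring
          rw [norm_mul, norm_mul, hexpn, norm_prod]
          have hgn := norm_nonneg (g j n)
          have hen := (Real.exp_pos ((-s) * (lam n).re)).le
          calc Real.exp ((-s) * (lam n).re) * ((∏ q : Fin k, ‖pX X s (j q)‖) * ‖g j n‖)
              = ‖g j n‖ * (Real.exp ((-s) * (lam n).re) * ∏ q : Fin k, ‖pX X s (j q)‖) := by
                ring
            _ ≤ ‖g j n‖ * (Real.exp ((-s) * (lam n).re)
                  * ((∏ q : Fin k, (‖X (j q)‖ + ‖F (j q)‖)) * (1-s)^k
                    * Real.exp (∑ q ∈ S₀, s * (lam (j q)).re))) := by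
                apply mul_le_mul_of_nonneg_left _ hgn
                exact mul_le_mul_of_nonneg_left hprodb hen
            _ = ‖g j n‖ * (∏ q : Fin k, (‖X (j q)‖ + ‖F (j q)‖))
                  * ((1 - s)^k * (Real.exp ((-s) * (lam n).re)
                    * Real.exp (∑ q ∈ S₀, s * (lam (j q)).re))) := by
                ring
            _ = ‖g j n‖ * (∏ q : Fin k, (‖X (j q)‖ + ‖F (j q)‖))
                  * ((1 - s)^k * Real.exp (-(lam n - ∑ q ∈ S₀, lam (j q)).re * s)) := by
                rw [hcomb]
      · push_neg at hjlt
        obtain ⟨q₀, hq₀⟩ := hjlt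
        have hz : (fun s : ℝ => Complex.exp (((-s : ℝ) : ℂ) * lam n)
            * ((∏ q, pX X s (j q)) * g j n)) = fun _ => 0 := by
          funext s
          rw [Finset.prod_eq_zero (Finset.mem_univ q₀) (hpXs s (j q₀) hq₀)]
          ring
        rw [hz]; exact integrable_zero _ _ _
    · -- linear forcing term
      have hε : (0:ℝ) < -(lam n).re := by linarith [hstable n hn]
      refine aux_integrable_of_bound (C := ‖F n‖) ?_ hε hk ?_
      · apply Continuous.aestronglyMeasurable ?_ |>.restrict
        fun_prop
      · intro s hs
        rw [norm_mul]
        have hexpn : ‖Complex.exp (((-s : ℝ) : ℂ) * lam n)‖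
            = Real.exp (-(lam n).re * s) := by
          rw [Complex.norm_exp]
          congr 1
          simp [Complex.mul_re]
          ring
        rw [hexpn]
        have hpow : (1:ℝ) ≤ (1-s)^k := one_le_pow₀ (by linarith)
        have hexp := (Real.exp_pos (-(lam n).re * s)).le
        have hFn := norm_nonneg (F n)
        calc Real.exp (-(lam n).re * s) * ‖F n‖
            = ‖F n‖ * (1 * Real.exp (-(lam n).re * s)) := by ring
          _ ≤ ‖F n‖ * ((1-s)^k * Real.exp (-(lam n).re * s)) := by
              refine mul_le_mul_of_nonneg_left ?_ hFn
              exact mul_le_mul_of_nonneg_right hpow hexp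
  -- integrability of f
  have hfint : IntegrableOn f (Set.Iic (0:ℝ)) := by
    have hdecomp : f = fun s => ∑ n : Fin N, Pi.single n (f s n) := by
      funext s
      exact (Finset.univ_sum_single (f s)).symm
    rw [hdecomp]
    apply integrable_finset_sum
    intro n _
    have hsingle : (fun s => Pi.single n (f s n))
        = fun s => (f s n) • (Pi.single n (1:ℂ) : Fin N → ℂ) := by
      funext s
      funext x
      simp [Pi.single_apply]
    rw [hsingle]
    by_cases hn : m_c ≤ (n:ℕ)
    · exact (hstab n hn).smul_const _
    · have hz : (fun s => (f s n) • (Pi.single n (1:ℂ) : Fin N → ℂ)) = fun _ => 0 := by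
        funext s
        rw [hzero n (not_le.mp hn) s, zero_smul]
      rw [hz]; exact integrable_zero _ _ _
  -- conclusion
  have hlim := MeasureTheory.intervalIntegral_tendsto_integral_Iic (μ := volume) (f := f) 0
    hfint tendsto_neg_atTop_atBot
  have hq2 : Tendsto (fun τ : ℝ => q X τ) atTop (nhds (J X)) := by
    rw [hJ X]
    refine hlim.congr (fun τ => ?_)
    rw [hq X τ]
  have h3 := (hq2.sub (tendsto_const_nhds (x := J X))).norm
  simpa using h3
end

section
/- Let N, k, m_c be integers with k ≥ 1 and 1 ≤ m_c < N. Let λ_1, …, λ_N ∈ ℂ and A = diag(λ_1,…,λ_N) on ℂ^N with standard basis e_1,…,e_N. Let A_c be the diagonal matrix with entries λ_1,…,λ_{m_c},0,…,0, and let G_k : (ℂ^N)^k → ℂ^N be k-multilinear with coefficients G^n_{j_1⋯j_k} = (G_k(e_{j_1},…,e_{j_k}))_n. Fix n with m_c < n ≤ N and assume Re(λ_{j_1} + ⋯ + λ_{j_k} − λ_n) > 0 for every tuple (j_1,…,j_k) ∈ {1,…,m_c}^k with G^n_{j_1⋯j_k} ≠ 0. Then for every X = Σ_{j=1}^{m_c}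 X_j e_j, the improper integral ∫_{−∞}^{0} e^{−s λ_n} (G_k(e^{sA_c}X, …, e^{sA_c}X))_n ds converges and equals Σ_{(j_1,…,j_k) ∈ {1,…,m_c}^k} G^n_{j_1⋯j_k} X_{j_1} ⋯ X_{j_k} / (λ_{j_1} + ⋯ + λ_{j_k} − λ_n). -/
open MeasureTheory intervalIntegral

open Filter in
lemma lp_aux_int (μ : ℂ) (hμ : 0 < μ.re) :
    IntegrableOn (fun s : ℝ => Complex.exp ((s : ℂ) * μ)) (Set.Iic (0:ℝ)) volume := by
  have hcont : Continuous fun s : ℝ => Complex.exp ((s : ℂ) * μ) :=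
    (Complex.continuous_ofReal.mul continuous_const).cexp
  refine integrableOn_Iic_of_intervalIntegral_norm_bounded (μ := volume)
    (a := fun i : ℝ => i) (l := atBot) (μ.re)⁻¹ 0
    (fun _ => hcont.integrableOn_Ioc) tendsto_id ?_
  filter_upwards with i
  have h1 : ∀ x : ℝ, ‖Complex.exp ((x : ℂ) * μ)‖ = Real.exp (x * μ.re) := by
    intro x
    rw [Complex.norm_exp]
    congr 1
    simp [Complex.mul_re]
  have h2 : (∫ x in i..(0:ℝ), ‖Complex.exp ((x : ℂ) * μ)‖)
      = ∫ x in i..(0:ℝ), Real.exp (x * μ.re) := by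
    simp_rw [h1]
  rw [h2]
  have h3 : (∫ x in i..(0:ℝ), Real.exp (x * μ.re))
      = (μ.re)⁻¹ • ∫ x in i * μ.re..0 * μ.re, Real.exp x :=
    integral_comp_mul_right Real.exp hμ.ne'
  rw [h3, zero_mul, integral_exp, smul_eq_mul, Real.exp_zero]
  have hle : 1 - Real.exp (i * μ.re) ≤ 1 := by
    have := Real.exp_pos (i * μ.re); linarith
  calc (μ.re)⁻¹ * (1 - Real.exp (i * μ.re)) ≤ (μ.re)⁻¹ * 1 :=
        mul_le_mul_of_nonneg_left hle (by positivity)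
    _ = (μ.re)⁻¹ := mul_one _

open Topology Filter in
lemma lp_aux_val (μ : ℂ) (hμ : 0 < μ.re) :
    ∫ s in Set.Iic (0:ℝ), Complex.exp ((s : ℂ) * μ) = 1 / μ := by
  have hμ0 : μ ≠ 0 := fun h => by simp [h] at hμ
  have hderiv : ∀ x : ℝ, x ∈ Set.Iic (0:ℝ) →
      HasDerivAt (fun s : ℝ => μ⁻¹ * Complex.exp ((s : ℂ) * μ)) (Complex.exp ((x : ℂ) * μ)) x := by
    intro x _
    have h1 : HasDerivAt (fun z : ℂ => μ⁻¹ * Complex.exp (z * μ))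
        (μ⁻¹ * (Complex.exp ((x : ℂ) * μ) * μ)) (x : ℂ) := by
      have h0 := (Complex.hasDerivAt_exp ((x : ℂ) * μ)).comp (x : ℂ) (hasDerivAt_mul_const μ)
      exact h0.const_mul μ⁻¹
    have h2 := h1.comp_ofReal
    have h3 : μ⁻¹ * (Complex.exp ((x : ℂ) * μ) * μ) = Complex.exp ((x : ℂ) * μ) := by
      field_simp
    rwa [h3] at h2
  have htend : Tendsto (fun s : ℝ => μ⁻¹ * Complex.exp ((s : ℂ) * μ)) atBot (𝓝 0) := by
    rw [tendsto_zero_iff_norm_tendsto_zero]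
    have hb : Tendsto (fun s : ℝ => Real.exp (s * μ.re)) atBot (𝓝 0) :=
      Real.tendsto_exp_atBot.comp (tendsto_id.atBot_mul_const hμ)
    have hb2 := hb.const_mul ‖μ⁻¹‖
    rw [mul_zero] at hb2
    apply hb2.congr
    intro s
    rw [norm_mul]
    congr 1
    rw [Complex.norm_exp]
    congr 1
    simp [Complex.mul_re]
  rw [integral_Iic_of_hasDerivAt_of_tendsto' hderiv (lp_aux_int μ hμ) htend]
  simp [one_div]

/-- Closed-form evaluation of the Lyapunov–Perron integral (the `n`-th component
of the leading-order invariant-manifold approximation) for a homogeneous nonlinearity of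
degree `k`, under the non-resonance condition. -/
theorem lyapunov_perron_integral_closed_form
    (N k m_c : ℕ) (hk : 1 ≤ k) (hmc : 1 ≤ m_c) (hmcN : m_c < N)
    (lam : Fin N → ℂ)
    (A_c : Matrix (Fin N) (Fin N) ℂ)
    (hAc : A_c = Matrix.diagonal (fun i : Fin N => if (i : ℕ) < m_c then lam i else 0))
    (G_k : MultilinearMap ℂ (fun _ : Fin k => (Fin N → ℂ)) (Fin N → ℂ))
    (n : Fin N) (hn : m_c ≤ (n : ℕ))
    (hNR : ∀ j : Fin k → Fin N, (∀ q : Fin k, ((j q : ℕ) < m_c)) →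
      (G_k fun q => Pi.single (j q) (1 : ℂ)) n ≠ 0 →
      0 < ((∑ q : Fin k, lam (j q)) - lam n).re)
    (X : Fin N → ℂ) (hX : ∀ i : Fin N, m_c ≤ (i : ℕ) → X i = 0) :
    IntegrableOn
      (fun s : ℝ => Complex.exp (-(s : ℂ) * lam n)
        * (G_k fun _ => (mexp (s • A_c)).mulVec X) n)
      (Set.Iic (0 : ℝ)) volume ∧
    (∫ s in Set.Iic (0 : ℝ), Complex.exp (-(s : ℂ) * lam n)
        * (G_k fun _ => (mexp (s • A_c)).mulVec X) n)
      = ∑ j : Fin k → Fin m_c,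
          (G_k fun q => Pi.single (Fin.castLE hmcN.le (j q)) (1 : ℂ)) n
            * (∏ q : Fin k, X (Fin.castLE hmcN.le (j q)))
            / ((∑ q : Fin k, lam (Fin.castLE hmcN.le (j q))) - lam n) := by
  classical
  set d : Fin N → ℂ := fun i => if (i : ℕ) < m_c then lam i else 0 with hd
  set cG : (Fin k → Fin N) → ℂ := fun j => (G_k fun q => Pi.single (j q) (1 : ℂ)) n with hcG
  set F : (Fin k → Fin N) → ℝ → ℂ := fun j s =>
    (cG j * ∏ q, X (j q)) * Complex.exp ((s : ℂ) * ((∑ q, d (j q)) - lam n)) with hF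
  -- the matrix exponential acting on X
  have hexp : ∀ s : ℝ, (mexp (s • A_c)).mulVec X
      = fun i => Complex.exp ((s : ℂ) * d i) * X i := by
    intro s
    have h1 : s • A_c = Matrix.diagonal (fun i => (s : ℂ) * d i) := by
      rw [hAc, ← Matrix.diagonal_smul]
      congr 1
    rw [h1, mexp, Matrix.exp_diagonal, Pi.exp_def]
    funext i
    rw [Matrix.mulVec_diagonal, Complex.exp_eq_exp_ℂ]
  -- pointwise expansion of the integrand
  have hpt : ∀ s : ℝ, Complex.exp (-(s : ℂ) * lam n)
      * (G_k fun _ => (mexp (s • A_c)).mulVec X) n = ∑ j : Fin k → Fin N, F j s := by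
    intro s
    rw [hexp s]
    have h1 : (fun i => Complex.exp ((s : ℂ) * d i) * X i)
        = ∑ i : Fin N, (Complex.exp ((s : ℂ) * d i) * X i) • (Pi.single i (1 : ℂ) : Fin N → ℂ) := by
      calc (fun i => Complex.exp ((s : ℂ) * d i) * X i)
          = ∑ i : Fin N, Pi.single i (Complex.exp ((s : ℂ) * d i) * X i) :=
            (Finset.univ_sum_single _).symm
        _ = ∑ i : Fin N, (Complex.exp ((s : ℂ) * d i) * X i) • (Pi.single i (1 : ℂ) : Fin N → ℂ) := by
            refine Finset.sum_congr rfl fun i _ => ?_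
            rw [← Pi.single_smul, smul_eq_mul, mul_one]
    rw [h1]
    have h2 : (G_k fun _ : Fin k =>
          ∑ i : Fin N, (Complex.exp ((s : ℂ) * d i) * X i) • (Pi.single i (1 : ℂ) : Fin N → ℂ))
        = ∑ j : Fin k → Fin N, G_k fun q =>
            (Complex.exp ((s : ℂ) * d (j q)) * X (j q)) • (Pi.single (j q) (1 : ℂ) : Fin N → ℂ) :=
      G_k.map_sum fun _ i => (Complex.exp ((s : ℂ) * d i) * X i) • (Pi.single i (1 : ℂ) : Fin N → ℂ)
    rw [h2, Finset.sum_apply, Finset.mul_sum]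
    refine Finset.sum_congr rfl fun j _ => ?_
    rw [MultilinearMap.map_smul_univ, Pi.smul_apply, smul_eq_mul]
    have h3 : (∏ q, Complex.exp ((s : ℂ) * d (j q)) * X (j q))
        = Complex.exp ((s : ℂ) * ∑ q, d (j q)) * ∏ q, X (j q) := by
      rw [Finset.prod_mul_distrib, ← Complex.exp_sum, ← Finset.mul_sum]
    rw [h3]
    simp only [hF, hcG]
    have h4 : (s : ℂ) * ((∑ q, d (j q)) - lam n)
        = -(s : ℂ) * lam n + (s : ℂ) * ∑ q, d (j q) := by ring
    rw [h4, Complex.exp_add]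
    ring
  -- integrability of each term
  have hFi : ∀ j : Fin k → Fin N, IntegrableOn (F j) (Set.Iic (0:ℝ)) volume := by
    intro j
    by_cases hc : cG j * ∏ q, X (j q) = 0
    · have hz : F j = fun _ => (0 : ℂ) := by
        funext s; simp only [hF, hc, zero_mul]
      rw [hz]
      exact integrableOn_zero
    · have hall : ∀ q, (j q : ℕ) < m_c := by
        intro q
        by_contra h
        exact hc (by
          rw [Finset.prod_eq_zero (Finset.mem_univ q) (hX _ (le_of_not_gt h)), mul_zero])
      have hcg : cG j ≠ 0 := fun h => hc (by rw [h, zero_mul])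
      have hre : 0 < ((∑ q, lam (j q)) - lam n).re := hNR j hall hcg
      have hLd : (∑ q : Fin k, d (j q)) = ∑ q, lam (j q) :=
        Finset.sum_congr rfl fun q _ => if_pos (hall q)
      have hI := (lp_aux_int _ hre).const_mul (cG j * ∏ q, X (j q))
      simp only [hF]
      rw [hLd]
      exact hI
  have hintsum : IntegrableOn (fun s => ∑ j : Fin k → Fin N, F j s) (Set.Iic (0:ℝ)) volume :=
    integrable_finset_sum _ fun j _ => hFi j
  have heq : (fun s : ℝ => Complex.exp (-(s : ℂ) * lam n)
      * (G_k fun _ => (mexp (s • A_c)).mulVec X) n)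
      = fun s => ∑ j : Fin k → Fin N, F j s := funext hpt
  constructor
  · rw [heq]; exact hintsum
  -- compute the integral
  rw [heq, integral_finset_sum _ fun j _ => hFi j]
  have hval : ∀ j : Fin k → Fin N, (∫ s in Set.Iic (0:ℝ), F j s)
      = cG j * (∏ q, X (j q)) / ((∑ q, d (j q)) - lam n) := by
    intro j
    by_cases hc : cG j * ∏ q, X (j q) = 0
    · simp only [hF, hc, zero_mul]
      rw [MeasureTheory.integral_zero, zero_div]
    · have hall : ∀ q, (j q : ℕ) < m_c := by
        intro q
        by_contra h
        exact hc (by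
          rw [Finset.prod_eq_zero (Finset.mem_univ q) (hX _ (le_of_not_gt h)), mul_zero])
      have hcg : cG j ≠ 0 := fun h => hc (by rw [h, zero_mul])
      have hre : 0 < ((∑ q, lam (j q)) - lam n).re := hNR j hall hcg
      have hLd : (∑ q : Fin k, d (j q)) = ∑ q, lam (j q) :=
        Finset.sum_congr rfl fun q _ => if_pos (hall q)
      simp only [hF]
      rw [hLd, MeasureTheory.integral_const_mul, lp_aux_val _ hre, mul_one_div, mul_div_assoc]
  rw [Finset.sum_congr rfl fun j _ => hval j]
  -- reindex the sum
  set e : (Fin k → Fin m_c) → (Fin k → Fin N) := fun j q => Fin.castLE hmcN.le (j q) with he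
  have hinj : Function.Injective e := by
    intro a b hab
    funext q
    exact Fin.castLE_injective _ (congrFun hab q)
  have himg : ∀ j : Fin k → Fin N, j ∉ Finset.univ.image e →
      cG j * (∏ q, X (j q)) / ((∑ q, d (j q)) - lam n) = 0 := by
    intro j hj
    by_cases hall : ∀ q, (j q : ℕ) < m_c
    · exact absurd (Finset.mem_image.2 ⟨fun q => ⟨(j q : ℕ), hall q⟩, Finset.mem_univ _, by
        funext q; exact Fin.ext rfl⟩) hj
    · push_neg at hall
      obtain ⟨q, hq⟩ := hall
      rw [Finset.prod_eq_zero (Finset.mem_univ q) (hX _ hq), mul_zero, zero_div]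
  rw [← Finset.sum_subset (Finset.subset_univ (Finset.univ.image e)) fun j _ hj => himg j hj]
  rw [Finset.sum_image fun a _ b _ h => hinj h]
  refine Finset.sum_congr rfl fun j _ => ?_
  have hall : ∀ q, ((e j q : ℕ)) < m_c := fun q => (j q).2
  have hLd : (∑ q : Fin k, d (e j q)) = ∑ q, lam (e j q) :=
    Finset.sum_congr rfl fun q _ => if_pos (hall q)
  rw [hLd]
end

section
/- Let m be a positive integer, A_c an m×m complex matrix, λ_n ∈ ℂ, G : ℂ^m → ℂ continuous, and F_c : ℝ → ℂ^m, f_n : ℝ → ℂ continuous. Fix t ∈ ℝ, τ ≥ 0 and X ∈ ℂ^m. Let p : [t−τ, t] → ℂ^m be the solution of p′(s) = A_c p(s) + F_c(s) with p(t) = X, and let q_n : [t−τ, t] → ℂ solve q_n′(s) = λ_n q_n(s) + G(p(s)) + f_n(s) with q_n(t−τ) = 0. Then q_n(t) = ∫_{−τ}^{0} e^{−s λ_n} G( e^{sA_c} X − η(s) ) ds + ∫_{−τ}^{0} e^{−s λ_n} f_n(s+t) ds, where η(s) = ∫_s^0 e^{(s−r)A_c} F_c(r+t) dr. -/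
open MeasureTheory intervalIntegral

section BFAux

attribute [local instance] Matrix.linftyOpNormedAddCommGroup Matrix.linftyOpNormedRing
  Matrix.linftyOpNormedSpace Matrix.linftyOpNormedAlgebra

namespace BFAux

variable {m : ℕ}

noncomputable def TL (m : ℕ) :
    Matrix (Fin m) (Fin m) ℂ →L[ℝ] ((Fin m → ℂ) →L[ℝ] (Fin m → ℂ)) :=
  LinearMap.toContinuousLinearMap
    { toFun := fun M => LinearMap.toContinuousLinearMap ((Matrix.mulVecLin M).restrictScalars ℝ)
      map_add' := fun M N => by
        ext v
        simp [Matrix.add_mulVec]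
      map_smul' := fun r M => by
        ext v
        simp [Matrix.smul_mulVec] }

@[simp] lemma TL_apply (M : Matrix (Fin m) (Fin m) ℂ) (v : Fin m → ℂ) :
    TL m M v = M.mulVec v := rfl

lemma hasDerivAt_real_of_complex {F : Type*} [NormedAddCommGroup F] [NormedSpace ℂ F]
    {e : ℂ → F} {e' : F} {z : ℝ} (hf : HasDerivAt e e' (z : ℂ)) :
    HasDerivAt (fun y : ℝ => e (y : ℂ)) e' z := by
  have h := HasDerivAt.scomp (𝕜 := ℝ) (𝕜' := ℂ) z hf Complex.ofRealCLM.hasDerivAt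
  simpa [Function.comp_def] using h

lemma mexp_hasDerivAt (A : Matrix (Fin m) (Fin m) ℂ) (s : ℝ) :
    HasDerivAt (fun u : ℝ => mexp (u • A)) (A * mexp (s • A)) s := by
  have h := hasDerivAt_exp_smul_const' (𝕂 := ℂ) A (s : ℂ)
  have h2 := hasDerivAt_real_of_complex h
  simp [mexp, Complex.coe_smul] at h2
  exact h2

lemma mexp_add_smul (A : Matrix (Fin m) (Fin m) ℂ) (a b : ℝ) :
    mexp ((a + b) • A) = mexp (a • A) * mexp (b • A) := by
  rw [mexp, mexp, mexp, add_smul]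
  exact NormedSpace.exp_add_of_commute (((Commute.refl A).smul_left a).smul_right b)

lemma mexp_continuous (A : Matrix (Fin m) (Fin m) ℂ) :
    Continuous fun s : ℝ => mexp (s • A) :=
  by unfold mexp; exact (NormedSpace.exp_continuous).comp (continuous_id.smul continuous_const)

lemma commute_mexp (A : Matrix (Fin m) (Fin m) ℂ) (a : ℝ) :
    Commute A (mexp (a • A)) :=
  ((Commute.refl A).smul_right a).exp_right

lemma mexp_zero (A : Matrix (Fin m) (Fin m) ℂ) : mexp ((0 : ℝ) • A) = 1 := by
  rw [mexp, zero_smul, NormedSpace.exp_zero]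

lemma mexp_zero' : mexp (0 : Matrix (Fin m) (Fin m) ℂ) = 1 := by
  rw [mexp, NormedSpace.exp_zero]

/-- Variation of constants for the resolved modes. -/
lemma p_formula (A : Matrix (Fin m) (Fin m) ℂ) (F_c : ℝ → (Fin m → ℂ)) (hFc : Continuous F_c)
    (t τ : ℝ) (hτ : 0 ≤ τ) (X : Fin m → ℂ)
    (p : ℝ → (Fin m → ℂ)) (hpt : p t = X)
    (hp : ∀ s ∈ Set.Icc (t - τ) t,
      HasDerivWithinAt p (A.mulVec (p s) + F_c s) (Set.Icc (t - τ) t) s)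
    {s : ℝ} (hs : s ∈ Set.Icc (t - τ) t) :
    p s = (mexp ((s - t) • A)).mulVec X
        - ∫ r in s..t, (mexp ((s - r) • A)).mulVec (F_c r) := by
  set I := Set.Icc (t - τ) t with hI
  set E : ℝ → Matrix (Fin m) (Fin m) ℂ := fun r => mexp ((t - r) • A) with hE
  set Bc : ℝ → ((Fin m → ℂ) →L[ℝ] (Fin m → ℂ)) := fun r => TL m (E r) with hBc
  -- derivative of E
  have hEderiv : ∀ r : ℝ, HasDerivAt E (-(A * E r)) r := by
    intro r
    have h1 : HasDerivAt (fun u : ℝ => t - u) (-1 : ℝ) r := (hasDerivAt_id r).const_sub t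
    have h2 := (mexp_hasDerivAt A (t - r)).scomp r h1
    simp [hE, Function.comp_def] at h2
    exact h2
  have hBderiv : ∀ r : ℝ, HasDerivAt Bc (TL m (-(A * E r))) r := fun r =>
    (TL m).hasFDerivAt.comp_hasDerivAt r (hEderiv r)
  -- derivative of the integrating-factor product
  have hΨ : ∀ r ∈ I, HasDerivWithinAt (fun u => Bc u (p u)) (Bc r (F_c r)) I r := by
    intro r hr
    have h := ((hBderiv r).hasDerivWithinAt).clm_apply (hp r hr)
    have hcomm : A * E r = E r * A := (commute_mexp A (t - r)).eq
    have : TL m (-(A * E r)) (p r) + Bc r (A.mulVec (p r) + F_c r) = Bc r (F_c r) := by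
      simp only [hBc, TL_apply, Matrix.neg_mulVec, Matrix.mulVec_add, hcomm,
        ← Matrix.mulVec_mulVec]
      abel
    rwa [this] at h
  -- continuity of the integrand
  have hcontE : Continuous E := (mexp_continuous A).comp (continuous_const.sub continuous_id)
  have hcontInt : Continuous fun r => Bc r (F_c r) :=
    Continuous.clm_apply ((TL m).continuous.comp hcontE) hFc
  have hst : s ≤ t := hs.2
  have hsub : Set.Icc s t ⊆ I := Set.Icc_subset_Icc hs.1 le_rfl
  have hftc :
      (∫ r in s..t, Bc r (F_c r)) = Bc t (p t) - Bc s (p s) := by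
    refine integral_eq_sub_of_hasDeriv_right_of_le hst
      (fun r hr => ((hΨ r (hsub hr)).mono hsub).continuousWithinAt) (fun r hr => ?_)
      (hcontInt.intervalIntegrable s t)
    exact (hΨ r (hsub (Set.Ioo_subset_Icc_self hr))).mono_of_mem_nhdsWithin
      (Filter.mem_of_superset (Icc_mem_nhdsGT_of_mem ⟨hr.1.le, hr.2⟩) hsub)
  have hBt : Bc t (p t) = X := by
    simp [hBc, hE, hpt, sub_self, mexp_zero', Matrix.one_mulVec]
  have hkey : Bc s (p s) = X - ∫ r in s..t, Bc r (F_c r) := by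
    rw [hftc, hBt, sub_sub_cancel]
  have hinv : ∀ v : Fin m → ℂ,
      (mexp ((s - t) • A)).mulVec ((mexp ((t - s) • A)).mulVec v) = v := by
    intro v
    rw [Matrix.mulVec_mulVec, ← mexp_add_smul]
    have : s - t + (t - s) = 0 := by ring
    rw [this, mexp_zero, Matrix.one_mulVec]
  have hps : p s = (mexp ((s - t) • A)).mulVec (Bc s (p s)) := by
    simp only [hBc, hE, TL_apply]
    exact (hinv (p s)).symm
  have hmain : p s = (mexp ((s - t) • A)).mulVec X
      - (TL m (mexp ((s - t) • A))) (∫ r in s..t, Bc r (F_c r)) := by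
    rw [hps, hkey]
    rw [show ((mexp ((s - t) • A)).mulVec (X - ∫ r in s..t, Bc r (F_c r)))
      = (TL m (mexp ((s - t) • A))) (X - ∫ r in s..t, Bc r (F_c r)) from rfl, map_sub]
    rfl
  rw [hmain,
    ← (TL m (mexp ((s - t) • A))).intervalIntegral_comp_comm (hcontInt.intervalIntegrable s t)]
  congr 1
  apply integral_congr
  intro r _
  simp only [hBc, hE, TL_apply, Function.comp, Matrix.mulVec_mulVec, ← mexp_add_smul,
    sub_add_sub_cancel]

lemma cexp_hasDerivAt (lam : ℂ) (s : ℝ) :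
    HasDerivAt (fun u : ℝ => Complex.exp (-lam * u)) (-lam * Complex.exp (-lam * s)) s := by
  have h : HasDerivAt (fun z : ℂ => Complex.exp (-lam * z))
      (-lam * Complex.exp (-lam * s)) (s : ℂ) := by
    simpa [Function.comp_def, mul_comm] using
      (Complex.hasDerivAt_exp (-lam * s)).comp (s : ℂ) ((hasDerivAt_id (s : ℂ)).const_mul (-lam))
  exact h.comp_ofReal

end BFAux

/-- Mode-wise solution formula for the backward–forward system with
time-dependent forcing `F_c` on the resolved modes and `f_n` on the `n`-th unresolved mode. -/
theorem bf_modewise_solution_formula_time_dependent_forcing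
    (m : ℕ) (hm : 0 < m)
    (A_c : Matrix (Fin m) (Fin m) ℂ) (lam_n : ℂ)
    (G : (Fin m → ℂ) → ℂ) (hG : Continuous G)
    (F_c : ℝ → (Fin m → ℂ)) (hFc : Continuous F_c)
    (f_n : ℝ → ℂ) (hfn : Continuous f_n)
    (t τ : ℝ) (hτ : 0 ≤ τ) (X : Fin m → ℂ)
    (p : ℝ → (Fin m → ℂ))
    (hpt : p t = X)
    (hp : ∀ s ∈ Set.Icc (t - τ) t,
      HasDerivWithinAt p (A_c.mulVec (p s) + F_c s) (Set.Icc (t - τ) t) s)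
    (q_n : ℝ → ℂ)
    (hq0 : q_n (t - τ) = 0)
    (hq : ∀ s ∈ Set.Icc (t - τ) t,
      HasDerivWithinAt q_n (lam_n * q_n s + G (p s) + f_n s) (Set.Icc (t - τ) t) s)
    (η : ℝ → (Fin m → ℂ))
    (hη : ∀ s : ℝ, η s = ∫ r in s..0, (mexp ((s - r) • A_c)).mulVec (F_c (r + t))) :
    q_n t = (∫ s in (-τ)..0, Complex.exp (-(s : ℂ) * lam_n)
              * G ((mexp (s • A_c)).mulVec X - η s))
          + ∫ s in (-τ)..0, Complex.exp (-(s : ℂ) * lam_n) * f_n (s + t) := by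
  set I := Set.Icc (t - τ) t with hI
  have htτ : t - τ ≤ t := by linarith
  have hτ0 : -τ ≤ (0 : ℝ) := by linarith
  have hpc : ContinuousOn p I := fun s hs => (hp s hs).continuousWithinAt
  set g : ℝ → ℂ := fun s => Complex.exp (-lam_n * s) * (G (p s) + f_n s) with hg_def
  have hgcont : ContinuousOn g I := by
    apply ContinuousOn.mul
    · exact (Complex.continuous_exp.comp
        (continuous_const.mul Complex.continuous_ofReal)).continuousOn
    · exact (hG.comp_continuousOn hpc).add hfn.continuousOn
  have hΦ : ∀ s ∈ I, HasDerivWithinAt (fun u : ℝ => Complex.exp (-lam_n * u) * q_n u) (g s) I s := by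
    intro s hs
    have h := ((BFAux.cexp_hasDerivAt lam_n s).hasDerivWithinAt).mul (hq s hs)
    have he : -lam_n * Complex.exp (-lam_n * s) * q_n s
        + Complex.exp (-lam_n * s) * (lam_n * q_n s + G (p s) + f_n s) = g s := by
      rw [hg_def]; ring
    rwa [he] at h
  have hftc : (∫ s in (t - τ)..t, g s) = Complex.exp (-lam_n * t) * q_n t := by
    have h := integral_eq_sub_of_hasDeriv_right_of_le htτ
      (fun s hs => (hΦ s hs).continuousWithinAt)
      (fun x hx => (hΦ x (Set.Ioo_subset_Icc_self hx)).mono_of_mem_nhdsWithin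
        (Icc_mem_nhdsGT_of_mem ⟨hx.1.le, hx.2⟩))
      (hgcont.intervalIntegrable_of_Icc htτ)
    rw [h, hq0, mul_zero, sub_zero]
  have hq_t : q_n t
      = ∫ u in (-τ)..0, Complex.exp (-lam_n * u) * (G (p (u + t)) + f_n (u + t)) := by
    have hcv := intervalIntegral.integral_comp_add_right (a := -τ) (b := 0) g t
    rw [neg_add_eq_sub, zero_add] at hcv
    have hmaineq : ∀ u : ℝ, Complex.exp (lam_n * t) * g (u + t)
        = Complex.exp (-lam_n * u) * (G (p (u + t)) + f_n (u + t)) := by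
      intro u
      rw [hg_def]
      simp only [Complex.ofReal_add]
      rw [← mul_assoc, ← Complex.exp_add,
        show lam_n * t + -lam_n * ((u : ℂ) + (t : ℂ)) = -lam_n * u from by ring]
    calc q_n t = Complex.exp (lam_n * t) * (Complex.exp (-lam_n * t) * q_n t) := by
          rw [← mul_assoc, ← Complex.exp_add,
            show lam_n * (t : ℂ) + -lam_n * t = 0 from by ring, Complex.exp_zero, one_mul]
      _ = Complex.exp (lam_n * t) * ∫ s in (t - τ)..t, g s := by rw [hftc]
      _ = Complex.exp (lam_n * t) * ∫ u in (-τ)..0, g (u + t) := by rw [hcv]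
      _ = ∫ u in (-τ)..0, Complex.exp (lam_n * t) * g (u + t) :=
          (intervalIntegral.integral_const_mul _ _).symm
      _ = ∫ u in (-τ)..0, Complex.exp (-lam_n * u) * (G (p (u + t)) + f_n (u + t)) :=
          integral_congr fun u _ => hmaineq u
  have hpid : ∀ u ∈ Set.uIcc (-τ) (0 : ℝ), p (u + t) = (mexp (u • A_c)).mulVec X - η u := by
    intro u hu
    rw [Set.uIcc_of_le hτ0] at hu
    have hmem : u + t ∈ I := ⟨by linarith [hu.1], by linarith [hu.2]⟩
    have h1 := BFAux.p_formula A_c F_c hFc t τ hτ X p hpt hp hmem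
    rw [h1, hη u, show u + t - t = u from by ring]
    congr 1
    have hcv2 := intervalIntegral.integral_comp_add_right (a := u) (b := 0)
      (fun r => (mexp ((u + t - r) • A_c)).mulVec (F_c r)) t
    rw [zero_add] at hcv2
    rw [← hcv2]
    exact integral_congr fun r _ => by simp only [add_sub_add_right_eq_sub]
  have hmapsTo : Set.MapsTo (fun u : ℝ => u + t) (Set.Icc (-τ) 0) I := by
    intro u hu
    simp only [Set.mem_Icc] at hu ⊢
    constructor <;> linarith [hu.1, hu.2]
  have hexpcont : Continuous fun u : ℝ => Complex.exp (-(u : ℂ) * lam_n) :=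
    Complex.continuous_exp.comp ((Complex.continuous_ofReal.neg).mul continuous_const)
  have hint1 : IntervalIntegrable
      (fun u : ℝ => Complex.exp (-(u : ℂ) * lam_n) * G (p (u + t))) volume (-τ) 0 := by
    apply ContinuousOn.intervalIntegrable_of_Icc hτ0
    exact hexpcont.continuousOn.mul
      (hG.comp_continuousOn (hpc.comp (continuous_id.add continuous_const).continuousOn hmapsTo))
  have hint2 : IntervalIntegrable
      (fun u : ℝ => Complex.exp (-(u : ℂ) * lam_n) * f_n (u + t)) volume (-τ) 0 :=
    (hexpcont.mul (hfn.comp (continuous_id.add continuous_const))).intervalIntegrable _ _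
  have e1 : (∫ u in (-τ)..0, Complex.exp (-(u : ℂ) * lam_n)
        * G ((mexp (u • A_c)).mulVec X - η u))
      = ∫ u in (-τ)..0, Complex.exp (-(u : ℂ) * lam_n) * G (p (u + t)) :=
    integral_congr fun u hu => by rw [hpid u hu]
  rw [hq_t, e1, ← intervalIntegral.integral_add hint1 hint2]
  refine integral_congr fun u hu => ?_
  simp only [show ∀ u : ℂ, -lam_n * u = -u * lam_n from fun u => by ring, mul_add]

end BFAux
end

section
/- Let m_c be a positive integer, λ_1,…,λ_{m_c}, λ_n ∈ ℂ, and A_c = diag(λ_1,…,λ_{m_c}) on ℂ^{m_c}. Let B^n_{ij} ∈ ℂ for 1 ≤ i,j ≤ m_c and define G(x) = Σ_{i,j=1}^{m_c} B^n_{ij} x_i x_j. Fix t ∈ ℝ, τ ≥ 0, ζ, σ_n ∈ ℂ, a continuous f_n : ℝ → ℂ, and X = (X_1,…,X_{m_c}) ∈ ℂ^{m_c}. If q_n : [t−τ, t] → ℂ solves q_n′(s) = λ_n q_n(s) + G(e^{(s−t)A_c}X) + σ_n f_n(s) with q_n(t−τ) = ζ, then q_n(t) = e^{λ_n τ} ζ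 + σ_n e^{λ_n t} ∫_{t−τ}^{t} e^{−λ_n s} f_n(s) ds + Σ_{i,j=1}^{m_c} D^n_{ij}(τ) B^n_{ij} X_i X_j, where D^n_{ij}(τ) = (1 − e^{−δ^n_{ij} τ})/δ^n_{ij} with δ^n_{ij} = λ_i + λ_j − λ_n whenever δ^n_{ij} ≠ 0, and D^n_{ij}(τ) = τ when δ^n_{ij} = 0. -/
open MeasureTheory intervalIntegral

/-- Explicit time-dependent variational (OPM) parameterization formula for a
quadratic nonlinearity, with nonzero initial condition `ζ` at `s = t − τ` and time-dependent
forcing `σ_n f_n` on the `n`-th unresolved mode. -/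
theorem opm_parameterization_quadratic_time_dependent
    (m_c : ℕ) (hmc : 0 < m_c)
    (lam : Fin m_c → ℂ) (lam_n : ℂ)
    (A_c : Matrix (Fin m_c) (Fin m_c) ℂ) (hAc : A_c = Matrix.diagonal lam)
    (B : Fin m_c → Fin m_c → ℂ)
    (G : (Fin m_c → ℂ) → ℂ)
    (hG : ∀ x : Fin m_c → ℂ, G x = ∑ i : Fin m_c, ∑ j : Fin m_c, B i j * x i * x j)
    (t τ : ℝ) (hτ : 0 ≤ τ) (ζ σ_n : ℂ)
    (f_n : ℝ → ℂ) (hfn : Continuous f_n)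
    (X : Fin m_c → ℂ)
    (q_n : ℝ → ℂ)
    (hq0 : q_n (t - τ) = ζ)
    (hq : ∀ s ∈ Set.Icc (t - τ) t,
      HasDerivWithinAt q_n
        (lam_n * q_n s + G ((mexp ((s - t) • A_c)).mulVec X) + σ_n * f_n s)
        (Set.Icc (t - τ) t) s) :
    q_n t = Complex.exp (lam_n * τ) * ζ
        + σ_n * Complex.exp (lam_n * t) * (∫ s in (t - τ)..t, Complex.exp (-lam_n * s) * f_n s)
        + ∑ i : Fin m_c, ∑ j : Fin m_c,
            (if lam i + lam j - lam_n = 0 then (τ : ℂ)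
              else (1 - Complex.exp (-(lam i + lam j - lam_n) * τ)) / (lam i + lam j - lam_n))
              * B i j * X i * X j := by
  subst hAc
  have hab : t - τ ≤ t := by linarith
  -- the quadratic term as an explicit function of s
  set g : ℝ → ℂ := fun s => ∑ i : Fin m_c, ∑ j : Fin m_c,
      B i j * Complex.exp (((s : ℂ) - t) * (lam i + lam j)) * (X i * X j) with hg
  have hGval : ∀ s : ℝ, G ((mexp ((s - t) • Matrix.diagonal lam)).mulVec X) = g s := by
    intro s
    have hmv : ∀ i, (mexp ((s - t) • Matrix.diagonal lam)).mulVec X i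
        = Complex.exp (((s : ℂ) - t) * lam i) * X i := by
      intro i
      have h1 : ((s - t) : ℝ) • Matrix.diagonal lam
          = Matrix.diagonal (fun i => ((s : ℂ) - t) * lam i) := by
        have hv : ((s - t) : ℝ) • lam = fun i => ((s : ℂ) - t) * lam i := by
          funext i
          simp only [Pi.smul_apply, Complex.real_smul]
          push_cast
          ring
        rw [← Matrix.diagonal_smul, hv]
      rw [mexp, h1, Matrix.exp_diagonal, Matrix.mulVec_diagonal, Pi.coe_exp,
        ← Complex.exp_eq_exp_ℂ]
    rw [hG]
    refine Finset.sum_congr rfl fun i _ => Finset.sum_congr rfl fun j _ => ?_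
    rw [hmv, hmv, mul_add, Complex.exp_add]
    ring
  have hgcont : Continuous g := by
    apply continuous_finset_sum
    intro i _
    apply continuous_finset_sum
    intro j _
    exact (continuous_const.mul (Complex.continuous_exp.comp
      (((Complex.continuous_ofReal.sub continuous_const).mul continuous_const)))).mul
      continuous_const
  -- continuity of q_n on the interval
  have hqcont : ContinuousOn q_n (Set.Icc (t - τ) t) := fun s hs =>
    (hq s hs).continuousWithinAt
  -- integrating factor
  set u : ℝ → ℂ := fun s => Complex.exp (-lam_n * s) * q_n s with hu
  set D : ℝ → ℂ := fun s => Complex.exp (-lam_n * s) * (g s + σ_n * f_n s) with hD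
  have hucont : ContinuousOn u (Set.Icc (t - τ) t) :=
    (Complex.continuous_exp.comp
      ((continuous_const.mul Complex.continuous_ofReal))).continuousOn.mul hqcont
  have hDcont : Continuous D :=
    (Complex.continuous_exp.comp (continuous_const.mul Complex.continuous_ofReal)).mul
      (hgcont.add (continuous_const.mul hfn))
  have huderiv : ∀ s ∈ Set.Ioo (t - τ) t, HasDerivWithinAt u (D s) (Set.Ioi s) s := by
    intro s hs
    have hsIcc : s ∈ Set.Icc (t - τ) t := Set.mem_Icc_of_Ioo hs
    have hexp : HasDerivAt (fun s : ℝ => Complex.exp (-lam_n * s))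
        (-lam_n * Complex.exp (-lam_n * s)) s := by
      have h1 : HasDerivAt (fun s : ℝ => -lam_n * (s : ℂ)) (-lam_n) s := by
        simpa using ((hasDerivAt_id (s : ℂ)).const_mul (-lam_n)).comp_ofReal
      simpa [mul_comm] using h1.cexp
    have hqd := hq s hsIcc
    have := (hexp.hasDerivWithinAt (s := Set.Icc (t - τ) t)).mul hqd
    have h2 : HasDerivWithinAt u (D s) (Set.Icc (t - τ) t) s := by
      refine this.congr_deriv ?_
      rw [hD, hGval]
      ring
    refine h2.mono_of_mem_nhdsWithin ?_
    have : Set.Ioc s t ∈ nhdsWithin s (Set.Ioi s) :=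
      Ioc_mem_nhdsGT_of_mem ⟨le_refl s, hs.2⟩
    exact Filter.mem_of_superset this fun x hx => ⟨le_trans hs.1.le hx.1.le, hx.2⟩
  have hint : IntervalIntegrable D volume (t - τ) t := hDcont.intervalIntegrable _ _
  have key : (∫ s in (t - τ)..t, D s) = u t - u (t - τ) :=
    integral_eq_sub_of_hasDeriv_right_of_le hab hucont huderiv hint
  -- split the integral
  have hsplit : (∫ s in (t - τ)..t, D s)
      = (∫ s in (t - τ)..t, Complex.exp (-lam_n * s) * g s)
        + σ_n * ∫ s in (t - τ)..t, Complex.exp (-lam_n * s) * f_n s := by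
    rw [← intervalIntegral.integral_const_mul, ← intervalIntegral.integral_add]
    · congr 1; funext s; rw [hD]; ring
    · exact ((Complex.continuous_exp.comp (continuous_const.mul
        Complex.continuous_ofReal)).mul hgcont).intervalIntegrable _ _
    · exact (continuous_const.mul ((Complex.continuous_exp.comp (continuous_const.mul
        Complex.continuous_ofReal)).mul hfn)).intervalIntegrable _ _
  -- compute the quadratic-term integral
  have hquad : (∫ s in (t - τ)..t, Complex.exp (-lam_n * s) * g s)
      = ∑ i : Fin m_c, ∑ j : Fin m_c,
          (Complex.exp (-lam_n * t) *
            (if lam i + lam j - lam_n = 0 then (τ : ℂ)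
              else (1 - Complex.exp (-(lam i + lam j - lam_n) * τ)) / (lam i + lam j - lam_n)))
            * B i j * (X i * X j) := by
    have : ∀ s : ℝ, Complex.exp (-lam_n * s) * g s
        = ∑ i : Fin m_c, ∑ j : Fin m_c,
            (Complex.exp (-(lam i + lam j) * t) *
              Complex.exp ((lam i + lam j - lam_n) * s)) * B i j * (X i * X j) := by
      intro s
      rw [hg]
      rw [Finset.mul_sum]
      refine Finset.sum_congr rfl fun i _ => ?_
      rw [Finset.mul_sum]
      refine Finset.sum_congr rfl fun j _ => ?_
      have hee : Complex.exp (-(lam i + lam j) * (t : ℂ)) *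
            Complex.exp ((lam i + lam j - lam_n) * (s : ℂ))
          = Complex.exp (-lam_n * s) * Complex.exp (((s : ℂ) - t) * (lam i + lam j)) := by
        rw [← Complex.exp_add, ← Complex.exp_add]
        congr 1
        ring
      rw [hee]
      ring
    rw [intervalIntegral.integral_congr (fun s _ => this s)]
    rw [intervalIntegral.integral_finset_sum]
    swap
    · intro i _
      apply Continuous.intervalIntegrable
      apply continuous_finset_sum
      intro j _
      fun_prop
    refine Finset.sum_congr rfl fun i _ => ?_
    rw [intervalIntegral.integral_finset_sum]
    swap
    · intro j _
      apply Continuous.intervalIntegrable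
      fun_prop
    refine Finset.sum_congr rfl fun j _ => ?_
    rw [intervalIntegral.integral_mul_const, intervalIntegral.integral_mul_const,
      intervalIntegral.integral_const_mul]
    congr 1
    congr 1
    by_cases hd : lam i + lam j - lam_n = 0
    · have hln : lam i + lam j = lam_n := by linear_combination hd
      simp only [if_pos hd, hd, zero_mul, Complex.exp_zero, intervalIntegral.integral_const,
        hln]
      push_cast
      simp [Complex.real_smul]
    · have e1 : Complex.exp (-(lam i + lam j) * t) * Complex.exp ((lam i + lam j - lam_n) * t)
          = Complex.exp (-lam_n * t) := by
        rw [← Complex.exp_add]; ring_nf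
      have e2 : Complex.exp (-(lam i + lam j) * t) *
            Complex.exp ((lam i + lam j - lam_n) * ((t - τ : ℝ) : ℂ))
          = Complex.exp (-lam_n * t) * Complex.exp (-(lam i + lam j - lam_n) * τ) := by
        rw [← Complex.exp_add, ← Complex.exp_add]; push_cast; ring_nf
      rw [integral_exp_mul_complex hd, if_neg hd, ← mul_div_assoc, ← mul_div_assoc]
      congr 1
      rw [mul_sub, mul_sub, e1, e2, mul_one]
  -- assemble
  have hEne : Complex.exp (lam_n * t) * Complex.exp (-lam_n * t) = 1 := by
    rw [← Complex.exp_add]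
    ring_nf
    exact Complex.exp_zero
  have hut : u t = u (t - τ) + ((∫ s in (t - τ)..t, Complex.exp (-lam_n * s) * g s)
      + σ_n * ∫ s in (t - τ)..t, Complex.exp (-lam_n * s) * f_n s) := by
    rw [← hsplit, key]; ring
  have hq_t : q_n t = Complex.exp (lam_n * t) * u t := by
    show q_n t = Complex.exp (lam_n * t) * (Complex.exp (-lam_n * t) * q_n t)
    rw [← mul_assoc, hEne, one_mul]
  have hu0 : u (t - τ) = Complex.exp (-lam_n * ((t - τ : ℝ) : ℂ)) * ζ := by
    simp only [hu]
    rw [hq0]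
  have h1 : Complex.exp (lam_n * t) * Complex.exp (-lam_n * ((t - τ : ℝ) : ℂ))
      = Complex.exp (lam_n * τ) := by
    rw [← Complex.exp_add]
    congr 1
    push_cast
    ring
  have hsum : Complex.exp (lam_n * t) * (∑ i : Fin m_c, ∑ j : Fin m_c,
        (Complex.exp (-lam_n * t) *
          (if lam i + lam j - lam_n = 0 then (τ : ℂ)
            else (1 - Complex.exp (-(lam i + lam j - lam_n) * τ)) / (lam i + lam j - lam_n)))
          * B i j * (X i * X j))
      = ∑ i : Fin m_c, ∑ j : Fin m_c,
          (if lam i + lam j - lam_n = 0 then (τ : ℂ)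
            else (1 - Complex.exp (-(lam i + lam j - lam_n) * τ)) / (lam i + lam j - lam_n))
            * B i j * X i * X j := by
    rw [Finset.mul_sum]
    refine Finset.sum_congr rfl fun i _ => ?_
    rw [Finset.mul_sum]
    refine Finset.sum_congr rfl fun j _ => ?_
    set d := (if lam i + lam j - lam_n = 0 then (τ : ℂ)
      else (1 - Complex.exp (-(lam i + lam j - lam_n) * τ)) / (lam i + lam j - lam_n)) with hdd
    calc Complex.exp (lam_n * t) * (Complex.exp (-lam_n * t) * d * B i j * (X i * X j))
        = (Complex.exp (lam_n * t) * Complex.exp (-lam_n * t)) * (d * B i j * X i * X j) := by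
          ring
      _ = d * B i j * X i * X j := by rw [hEne, one_mul]
  rw [hq_t, hut, hquad, hu0, mul_add, mul_add, ← mul_assoc, h1, hsum]
  ring
end
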